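/- arXiv:2604.12808 — 9 statements merged into one kernel-verified Lean document; each statement's English description precedes it below -/
import Mathlib

section
/- For every complex matrix A indexed by pairs (i,k), i,k ∈ {1,…,n}, and all indices i,j,k,l, the entry Φ(A)_{(i,k),(j,l)} equals A_{(i,k),(j,l)} if (i = j and k = l) or (i = k and j = l) or (i = l and k = j), and equals 0 otherwise. In other words, Φ is the projection that zeroes out every entry of A except those in positions of the form |i⟩⟨i|⊗|j⟩⟨j|, |i⟩⟨j|⊗|i⟩⟨j|, or |i⟩⟨j|⊗|j⟩⟨i|. -/
open Matrix Kronecker BigOperators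

/-- The diagonal sign matrix `O_ε` with diagonal entries `±1` determined by `ε`. -/
noncomputable def signDiag (n : ℕ) (ε : Fin n → Bool) : Matrix (Fin n) (Fin n) ℂ :=
  Matrix.diagonal (fun i => if ε i then 1 else -1)

/-- The local diagonal orthogonal twirl
`Φ(A) = 2⁻ⁿ ∑_ε (O_ε ⊗ O_ε) A (O_ε ⊗ O_ε)`. -/
noncomputable def twirl {n : ℕ} (A : Matrix (Fin n × Fin n) (Fin n × Fin n) ℂ) :
    Matrix (Fin n × Fin n) (Fin n × Fin n) ℂ :=
  ((2 : ℂ) ^ n)⁻¹ • ∑ ε : Fin n → Bool,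
    (signDiag n ε ⊗ₖ signDiag n ε) * A * (signDiag n ε ⊗ₖ signDiag n ε)

/-- The sign `±1` of `ε` at `x`, as a complex number. -/
noncomputable def sgn {n : ℕ} (ε : Fin n → Bool) (x : Fin n) : ℂ :=
  if ε x then 1 else -1

lemma sgn_sq {n : ℕ} (ε : Fin n → Bool) (x : Fin n) : sgn ε x * sgn ε x = 1 := by
  unfold sgn; cases ε x <;> norm_num

lemma sgn_update {n : ℕ} (ε : Fin n → Bool) (m x : Fin n) :
    sgn (Function.update ε m (!ε m)) x = (if x = m then -1 else 1) * sgn ε x := by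
  by_cases hx : x = m
  · subst hx
    simp only [sgn, Function.update_self, if_pos rfl]
    cases ε x <;> norm_num
  · simp [sgn, Function.update_of_ne hx, hx]

lemma twirl_apply {n : ℕ} (A : Matrix (Fin n × Fin n) (Fin n × Fin n) ℂ) (i j k l : Fin n) :
    twirl A (i, k) (j, l) =
      ((2 : ℂ) ^ n)⁻¹ *
        ((∑ ε : Fin n → Bool, sgn ε i * sgn ε k * sgn ε j * sgn ε l) * A (i, k) (j, l)) := by
  have h : ∀ ε : Fin n → Bool,
      ((signDiag n ε ⊗ₖ signDiag n ε) * A * (signDiag n ε ⊗ₖ signDiag n ε)) (i, k) (j, l)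
        = sgn ε i * sgn ε k * sgn ε j * sgn ε l * A (i, k) (j, l) := by
    intro ε
    rw [show signDiag n ε ⊗ₖ signDiag n ε
        = Matrix.diagonal (fun p : Fin n × Fin n => sgn ε p.1 * sgn ε p.2) by
      simpa [signDiag, sgn] using
        Matrix.diagonal_kronecker_diagonal (fun x => sgn ε x) (fun x => sgn ε x)]
    rw [Matrix.mul_diagonal, Matrix.diagonal_mul]
    ring
  simp only [twirl, Matrix.smul_apply, Matrix.sum_apply, h, smul_eq_mul, ← Finset.sum_mul]

/-- If the pairing condition fails, some index occurs exactly once among `i, k, j, l`. -/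
lemma exists_neg_sign {n : ℕ} (i j k l : Fin n)
    (h : ¬ ((i = j ∧ k = l) ∨ (i = k ∧ j = l) ∨ (i = l ∧ k = j))) :
    ∃ m : Fin n,
      ((if i = m then (-1 : ℂ) else 1) * (if k = m then -1 else 1)) *
        ((if j = m then -1 else 1) * (if l = m then -1 else 1)) = -1 := by
  push_neg at h
  obtain ⟨h1, h2, h3⟩ := h
  by_cases hij : i = j
  · have hkl : k ≠ l := h1 hij
    by_cases hik : i = k
    · -- i = j = k, so from h2, j ≠ l, hence l differs from all
      have hjl : j ≠ l := h2 hik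
      refine ⟨l, ?_⟩
      have h1' : i ≠ l := hij ▸ hjl
      simp [h1', hkl, hjl]
    · -- k differs from all of i, j, l
      refine ⟨k, ?_⟩
      have hjk : j ≠ k := fun e => hik (hij.trans e)
      have hik' : i ≠ k := hik
      have hlk : l ≠ k := hkl.symm
      simp [hik', hjk, hlk]
  · by_cases hik : i = k
    · -- from h2, j ≠ l; j differs from all
      have hjl : j ≠ l := h2 hik
      refine ⟨j, ?_⟩
      have hij' : i ≠ j := hij
      have hkj : k ≠ j := fun e => hij (hik.trans e)
      have hlj : l ≠ j := hjl.symm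
      simp [hij', hkj, hlj]
    · by_cases hil : i = l
      · -- from h3, k ≠ j; k differs from all
        have hkj : k ≠ j := h3 hil
        refine ⟨k, ?_⟩
        have hik' : i ≠ k := hik
        have hjk : j ≠ k := fun e => hkj e.symm
        have hlk : l ≠ k := fun e => hik (hil.trans e)
        simp [hik', hjk, hlk]
      · -- i differs from all
        refine ⟨i, ?_⟩
        have hji : j ≠ i := fun e => hij e.symm
        have hki : k ≠ i := fun e => hik e.symm
        have hli : l ≠ i := fun e => hil e.symm
        simp [hji, hki, hli]

/-- The twirl `Φ` zeroes out every entry of `A` except those in positions of the form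
`|i⟩⟨i| ⊗ |j⟩⟨j|`, `|i⟩⟨j| ⊗ |i⟩⟨j|`, or `|i⟩⟨j| ⊗ |j⟩⟨i|`. -/
theorem twirl_entry (n : ℕ) (hn : 2 ≤ n)
    (A : Matrix (Fin n × Fin n) (Fin n × Fin n) ℂ) (i j k l : Fin n) :
    twirl A (i, k) (j, l) =
      if (i = j ∧ k = l) ∨ (i = k ∧ j = l) ∨ (i = l ∧ k = j)
      then A (i, k) (j, l) else 0 := by
  rw [twirl_apply]
  by_cases h : (i = j ∧ k = l) ∨ (i = k ∧ j = l) ∨ (i = l ∧ k = j)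
  · rw [if_pos h]
    have hterm : ∀ ε : Fin n → Bool, sgn ε i * sgn ε k * sgn ε j * sgn ε l = 1 := by
      intro ε
      rcases h with ⟨rfl, rfl⟩ | ⟨rfl, rfl⟩ | ⟨rfl, rfl⟩
      · calc sgn ε i * sgn ε k * sgn ε i * sgn ε k
            = (sgn ε i * sgn ε i) * (sgn ε k * sgn ε k) := by ring
          _ = 1 := by rw [sgn_sq, sgn_sq, one_mul]
      · calc sgn ε i * sgn ε i * sgn ε j * sgn ε j
            = (sgn ε i * sgn ε i) * (sgn ε j * sgn ε j) := by ring
          _ = 1 := by rw [sgn_sq, sgn_sq, one_mul]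
      · calc sgn ε i * sgn ε k * sgn ε k * sgn ε i
            = (sgn ε i * sgn ε i) * (sgn ε k * sgn ε k) := by ring
          _ = 1 := by rw [sgn_sq, sgn_sq, one_mul]
    rw [Finset.sum_congr rfl (fun ε _ => hterm ε), Finset.sum_const]
    have hcard : (Finset.univ : Finset (Fin n → Bool)).card = 2 ^ n := by
      simp [Fintype.card_fun]
    rw [hcard]
    have h2 : ((2 : ℂ) ^ n) ≠ 0 := pow_ne_zero _ two_ne_zero
    rw [nsmul_eq_mul]
    push_cast
    field_simp
  · rw [if_neg h]
    obtain ⟨m, hm⟩ := exists_neg_sign i j k l h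
    have hsum : (∑ ε : Fin n → Bool, sgn ε i * sgn ε k * sgn ε j * sgn ε l) = 0 := by
      apply Finset.sum_involution (fun ε _ => Function.update ε m (!ε m))
      · intro ε _
        have : sgn (Function.update ε m (!ε m)) i * sgn (Function.update ε m (!ε m)) k *
            sgn (Function.update ε m (!ε m)) j * sgn (Function.update ε m (!ε m)) l
            = -(sgn ε i * sgn ε k * sgn ε j * sgn ε l) := by
          rw [sgn_update, sgn_update, sgn_update, sgn_update]
          rw [show ((if i = m then (-1:ℂ) else 1) * sgn ε i) * ((if k = m then (-1:ℂ) else 1) * sgn ε k) *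
              ((if j = m then (-1:ℂ) else 1) * sgn ε j) * ((if l = m then (-1:ℂ) else 1) * sgn ε l)
              = (((if i = m then (-1:ℂ) else 1) * (if k = m then -1 else 1)) *
                 ((if j = m then -1 else 1) * (if l = m then -1 else 1))) *
                (sgn ε i * sgn ε k * sgn ε j * sgn ε l) by ring, hm]
          ring
        rw [this]; ring
      · intro ε _ _
        intro hcontra
        have := congrFun hcontra m
        simp [Function.update_self] at this
      · intro ε _
        funext x
        by_cases hx : x = m
        · subst hx; simp [Function.update_self]
        · simp [Function.update_of_ne hx]
      · intro ε _; exact Finset.mem_univ _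
    rw [hsum, zero_mul, mul_zero]
end

section
/- Let ρ_1,…,ρ_N be LDOI positive semidefinite matrices indexed by pairs, let p_1,…,p_N be nonnegative reals, and let (P_1,…,P_N) be a PPT POVM. Then (Φ(P_1),…,Φ(P_N)) is also a PPT POVM, each Φ(P_k) is LDOI, and the success probability is unchanged: ∑_{k=1}^N p_k · Tr(Φ(P_k) ρ_k) = ∑_{k=1}^N p_k · Tr(P_k ρ_k). In particular, the optimal PPT success probability for an ensemble of LDOI states is attained by LDOI measurement operators. -/
open Matrix Kronecker BigOperators
open scoped ComplexOrder

/-- The partial transpose on the first factor: `T₁(M)_{(i,k),(j,l)} = M_{(j,k),(i,l)}`. -/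
def ptranspose {n : ℕ} (M : Matrix (Fin n × Fin n) (Fin n × Fin n) ℂ) :
    Matrix (Fin n × Fin n) (Fin n × Fin n) ℂ :=
  Matrix.of fun p q => M (q.1, p.2) (p.1, q.2)

noncomputable def Umat (n : ℕ) (ε : Fin n → Bool) :
    Matrix (Fin n × Fin n) (Fin n × Fin n) ℂ :=
  signDiag n ε ⊗ₖ signDiag n ε

lemma twirl_eq_U {n : ℕ} (A : Matrix (Fin n × Fin n) (Fin n × Fin n) ℂ) :
    twirl A = ((2 : ℂ) ^ n)⁻¹ • ∑ ε : Fin n → Bool, Umat n ε * A * Umat n ε := rfl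

lemma signDiag_mul (n : ℕ) (ε δ : Fin n → Bool) :
    signDiag n ε * signDiag n δ = signDiag n (fun i => ε i == δ i) := by
  unfold signDiag
  rw [Matrix.diagonal_mul_diagonal]
  have : (fun i => (if ε i then (1 : ℂ) else -1) * (if δ i then 1 else -1))
      = fun i => if (ε i == δ i) then (1 : ℂ) else -1 := by
    funext i; cases hε : ε i <;> cases hδ : δ i <;> norm_num
  rw [this]

lemma Umat_mul (n : ℕ) (ε δ : Fin n → Bool) :
    Umat n ε * Umat n δ = Umat n (fun i => ε i == δ i) := by
  simp only [Umat, ← Matrix.mul_kronecker_mul, signDiag_mul]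

lemma Umat_sq (n : ℕ) (ε : Fin n → Bool) : Umat n ε * Umat n ε = 1 := by
  rw [Umat_mul]
  have h : (fun i => ε i == ε i) = fun _ : Fin n => true := by
    funext i; exact beq_self_eq_true (ε i)
  rw [h]
  have h1 : signDiag n (fun _ => true) = 1 := by
    unfold signDiag
    simp
  rw [Umat, h1, Matrix.one_kronecker_one]

lemma Umat_diag (n : ℕ) (ε : Fin n → Bool) :
    Umat n ε = Matrix.diagonal (fun p : Fin n × Fin n =>
      (if ε p.1 then (1 : ℂ) else -1) * (if ε p.2 then 1 else -1)) :=
  Matrix.diagonal_kronecker_diagonal _ _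

lemma Umat_herm (n : ℕ) (ε : Fin n → Bool) : (Umat n ε)ᴴ = Umat n ε := by
  rw [Umat_diag, Matrix.diagonal_conjTranspose]
  have h : (star fun p : Fin n × Fin n =>
      (if ε p.1 then (1 : ℂ) else -1) * (if ε p.2 then 1 else -1))
      = fun p : Fin n × Fin n => (if ε p.1 then (1 : ℂ) else -1) * (if ε p.2 then 1 else -1) := by
    funext p
    simp only [Pi.star_apply]
    cases hp1 : ε p.1 <;> cases hp2 : ε p.2 <;> simp
  rw [h]

lemma two_pow_ne (n : ℕ) : ((2 : ℂ) ^ n) ≠ 0 := by positivity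

lemma twirl_one (n : ℕ) : twirl (1 : Matrix (Fin n × Fin n) (Fin n × Fin n) ℂ) = 1 := by
  rw [twirl_eq_U]
  have h : ∀ ε : Fin n → Bool, Umat n ε * 1 * Umat n ε = 1 := by
    intro ε; rw [Matrix.mul_one, Umat_sq]
  simp only [h, Finset.sum_const, Finset.card_univ]
  rw [← Nat.cast_smul_eq_nsmul ℂ, smul_smul]
  simp only [Fintype.card_fun, Fintype.card_bool, Fintype.card_fin]
  rw [Nat.cast_pow, Nat.cast_ofNat, inv_mul_cancel₀ (two_pow_ne n), one_smul]

lemma twirl_sum {n N : ℕ} (f : Fin N → Matrix (Fin n × Fin n) (Fin n × Fin n) ℂ) :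
    twirl (∑ k, f k) = ∑ k, twirl (f k) := by
  simp only [twirl_eq_U, Finset.mul_sum, Finset.sum_mul, Finset.smul_sum, ← Finset.smul_sum]
  rw [Finset.sum_comm]

set_option maxHeartbeats 1000000 in
lemma psd_smul {m : Type*} [Fintype m] {c : ℝ} (hc : 0 ≤ c)
    {A : Matrix m m ℂ} (hA : A.PosSemidef) : ((c : ℂ) • A).PosSemidef := by
  constructor
  · unfold Matrix.IsHermitian
    rw [Matrix.conjTranspose_smul, Complex.star_def, Complex.conj_ofReal, hA.1]
  · intro x
    exact (hA.smul (a := (c : ℂ)) (Complex.zero_le_real.2 hc)).2 x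

set_option maxHeartbeats 1000000 in
lemma psd_twirl {n : ℕ} {A : Matrix (Fin n × Fin n) (Fin n × Fin n) ℂ}
    (hA : A.PosSemidef) : (twirl A).PosSemidef := by
  rw [twirl_eq_U]
  have hsum : (∑ ε : Fin n → Bool, Umat n ε * A * Umat n ε).PosSemidef := by
    refine Finset.sum_induction (fun ε => Umat n ε * A * Umat n ε) (fun M => M.PosSemidef)
      (fun a b ha hb => ha.add hb) Matrix.PosSemidef.zero (fun ε _ => ?_)
    have h := hA.conjTranspose_mul_mul_same (Umat n ε)
    rwa [Umat_herm] at h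
  have hcast : ((2 : ℂ) ^ n)⁻¹ = ((((2 : ℝ) ^ n)⁻¹ : ℝ) : ℂ) := by push_cast; ring
  rw [hcast]
  exact psd_smul (by positivity) hsum

lemma ptranspose_twirl {n : ℕ} (A : Matrix (Fin n × Fin n) (Fin n × Fin n) ℂ) :
    ptranspose (twirl A) = twirl (ptranspose A) := by
  ext ⟨i, k⟩ ⟨j, l⟩
  simp only [ptranspose, twirl_eq_U, Umat_diag, Matrix.of_apply, Matrix.smul_apply,
    Matrix.sum_apply, Matrix.diagonal_mul, Matrix.mul_diagonal]
  congr 1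
  apply Finset.sum_congr rfl
  intro ε _
  ring

lemma twirl_twirl {n : ℕ} (A : Matrix (Fin n × Fin n) (Fin n × Fin n) ℂ) :
    twirl (twirl A) = twirl A := by
  have key : ∀ δ : Fin n → Bool,
      ∑ ε : Fin n → Bool, Umat n δ * (Umat n ε * A * Umat n ε) * Umat n δ
        = ∑ ε : Fin n → Bool, Umat n ε * A * Umat n ε := by
    intro δ
    have hinv : Function.Involutive (fun ε : Fin n → Bool => fun i => ε i == δ i) := by
      intro ε; funext i; cases h1 : ε i <;> cases h2 : δ i <;> simp [h1, h2]
    refine Fintype.sum_bijective _ hinv.bijective _ _ ?_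
    intro ε
    have h1 : Umat n δ * (Umat n ε * A * Umat n ε) * Umat n δ
        = (Umat n δ * Umat n ε) * A * (Umat n ε * Umat n δ) := by
      simp only [Matrix.mul_assoc]
    rw [h1, Umat_mul, Umat_mul]
    have h2 : (fun i => δ i == ε i) = fun i => ε i == δ i := by
      funext i; cases h3 : ε i <;> cases h4 : δ i <;> simp [h3, h4]
    rw [h2]
  calc twirl (twirl A)
      = ((2 : ℂ) ^ n)⁻¹ • ((2 : ℂ) ^ n)⁻¹ • ∑ δ : Fin n → Bool,
          ∑ ε : Fin n → Bool, Umat n δ * (Umat n ε * A * Umat n ε) * Umat n δ := by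
        simp only [twirl_eq_U, Finset.mul_sum, Finset.sum_mul, Finset.smul_sum,
          Matrix.mul_smul, Matrix.smul_mul]
    _ = ((2 : ℂ) ^ n)⁻¹ • ((2 : ℂ) ^ n)⁻¹ • ∑ _δ : Fin n → Bool,
          ∑ ε : Fin n → Bool, Umat n ε * A * Umat n ε := by
        simp only [key]
    _ = twirl A := by
        rw [Finset.sum_const, Finset.card_univ]
        rw [← Nat.cast_smul_eq_nsmul ℂ, smul_smul, smul_smul]
        simp only [Fintype.card_fun, Fintype.card_bool, Fintype.card_fin]
        rw [Nat.cast_pow, Nat.cast_ofNat, mul_assoc, inv_mul_cancel₀ (two_pow_ne n), mul_one,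
          twirl_eq_U]

lemma trace_twirl_mul {n : ℕ} (A B : Matrix (Fin n × Fin n) (Fin n × Fin n) ℂ) :
    (twirl A * B).trace = (A * twirl B).trace := by
  rw [twirl_eq_U, twirl_eq_U, Matrix.smul_mul, Matrix.mul_smul, Matrix.trace_smul,
    Matrix.trace_smul]
  congr 1
  rw [Finset.sum_mul, Finset.mul_sum, Matrix.trace_sum, Matrix.trace_sum]
  apply Finset.sum_congr rfl
  intro ε _
  have h1 : Umat n ε * A * Umat n ε * B = Umat n ε * (A * (Umat n ε * B)) := by
    simp only [Matrix.mul_assoc]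
  have h2 : A * (Umat n ε * B * Umat n ε) = A * (Umat n ε * B) * Umat n ε := by
    simp only [Matrix.mul_assoc]
  rw [h1, h2, Matrix.trace_mul_comm]

/-- Twirling a PPT POVM for an ensemble of LDOI states gives a PPT POVM consisting of LDOI
operators with the same success probability. In particular, the optimal PPT success
probability for an ensemble of LDOI states is attained by LDOI measurement operators. -/
theorem twirl_ppt_povm (n N : ℕ) (hn : 2 ≤ n)
    (ρ : Fin N → Matrix (Fin n × Fin n) (Fin n × Fin n) ℂ)
    (hρpsd : ∀ k, (ρ k).PosSemidef) (hρldoi : ∀ k, twirl (ρ k) = ρ k)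
    (p : Fin N → ℝ) (hp : ∀ k, 0 ≤ p k)
    (P : Fin N → Matrix (Fin n × Fin n) (Fin n × Fin n) ℂ)
    (hPpsd : ∀ k, (P k).PosSemidef) (hPsum : ∑ k, P k = 1)
    (hPppt : ∀ k, (ptranspose (P k)).PosSemidef) :
    (∑ k, twirl (P k) = 1) ∧
    (∀ k, (twirl (P k)).PosSemidef) ∧
    (∀ k, (ptranspose (twirl (P k))).PosSemidef) ∧
    (∀ k, twirl (twirl (P k)) = twirl (P k)) ∧
    (∑ k, (p k : ℂ) * (twirl (P k) * ρ k).trace = ∑ k, (p k : ℂ) * (P k * ρ k).trace) := by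
  refine ⟨?_, fun k => psd_twirl (hPpsd k), ?_, fun k => twirl_twirl _, ?_⟩
  · rw [← twirl_sum, hPsum, twirl_one]
  · intro k
    rw [ptranspose_twirl]
    exact psd_twirl (hPppt k)
  · apply Finset.sum_congr rfl
    intro k _
    rw [trace_twirl_mul, hρldoi k]
end

section
/- Let σ be any permutation of {1,…,n}. Define the family (P_{i,j})_{1≤i,j≤n} by: P_{i,i} = |e_{σ(i)}⟩⟨e_{σ(i)}| ⊗ |e_{σ(i)}⟩⟨e_{σ(i)}| for all i; for i < j, P_{i,j} = |e_i⟩⟨e_i| ⊗ |e_j⟩⟨e_j| and P_{j,i} = |e_j⟩⟨e_j| ⊗ |e_i⟩⟨e_i| if |a_{i,j}| ≥ |a_{j,i}|, and P_{i,j} = |e_j⟩⟨e_j| ⊗ |e_i⟩⟨e_i| and P_{j,i} = |e_i⟩⟨e_i| ⊗ |e_j⟩⟨e_j| otherwise. Then (P_{i,j}) is a POVM whose elements are Kronecker products of positive semidefinite matrices (hence separable), ⟨φ_{i,i}, P_{i,i} φ_{i,i}⟩ = |u_{i,σ(i)}|² for all i, ⟨φ_{i,j}, P_{i,j} φ_{i,j}⟩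 = max{|a_{i,j}|², |a_{j,i}|²} for all i ≠ j, and its success probability for the uniform ensemble equals (1/n²)·(∑_{i≠j} max{|a_{i,j}|², |a_{j,i}|²} + ∑_{i=1}^n |u_{i,σ(i)}|²). -/
open Matrix Kronecker BigOperators
open scoped ComplexOrder

/-- The vectors of the orthonormal LDOI basis associated to `(U, A)`:
`φ_{i,i} = ∑_k u_{i,k} e_k ⊗ e_k`;
for `i < j`, `φ_{i,j} = a_{i,j} e_i ⊗ e_j + conj(a_{j,i}) e_j ⊗ e_i` and
`φ_{j,i} = a_{j,i} e_i ⊗ e_j − conj(a_{i,j}) e_j ⊗ e_i`. -/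
noncomputable def ldoiBasis {n : ℕ} (U A : Matrix (Fin n) (Fin n) ℂ) (i j : Fin n) :
    (Fin n × Fin n) → ℂ :=
  if i = j then (fun p => if p.1 = p.2 then U i p.1 else 0)
  else if i < j then
    (fun p => if p = (i, j) then A i j else if p = (j, i) then (starRingEnd ℂ) (A j i) else 0)
  else
    (fun p => if p = (j, i) then A i j else if p = (i, j) then -(starRingEnd ℂ) (A j i) else 0)

/-- The rank-one projection `|e_k⟩⟨e_k|` on `ℂⁿ`. -/
def proj {n : ℕ} (k : Fin n) : Matrix (Fin n) (Fin n) ℂ :=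
  Matrix.single k k 1

/-- The local (product) measurement operators from the proof of the LOCC lower bound:
`P_{i,i} = |e_{σ(i)}⟩⟨e_{σ(i)}| ⊗ |e_{σ(i)}⟩⟨e_{σ(i)}|`, and for `i ≠ j` the product projection
determined by which of `|a_{i,j}|, |a_{j,i}|` is larger. -/
noncomputable def locMeas {n : ℕ} (A : Matrix (Fin n) (Fin n) ℂ) (σ : Equiv.Perm (Fin n))
    (i j : Fin n) : Matrix (Fin n × Fin n) (Fin n × Fin n) ℂ :=
  if i = j then proj (σ i) ⊗ₖ proj (σ i)
  else if i < j then
    (if ‖A j i‖ ≤ ‖A i j‖ then proj i ⊗ₖ proj j else proj j ⊗ₖ proj i)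
  else
    (if ‖A i j‖ ≤ ‖A j i‖ then proj i ⊗ₖ proj j else proj j ⊗ₖ proj i)


lemma proj_posSemidef {n : ℕ} (k : Fin n) : (proj k).PosSemidef := by
  have h : proj k = (proj k)ᴴ * proj k := by
    ext a b
    simp [proj, Matrix.single, Matrix.mul_apply, Matrix.conjTranspose_apply,
      ite_and, Finset.sum_ite_eq, and_comm]
    split_ifs <;> rfl
  rw [h]
  exact Matrix.posSemidef_conjTranspose_mul_self _

lemma quad {n : ℕ} (a b : Fin n) (v : Fin n × Fin n → ℂ) :
    star v ⬝ᵥ ((proj a ⊗ₖ proj b) *ᵥ v) = (starRingEnd ℂ) (v (a, b)) * v (a, b) := by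
  simp [dotProduct, Matrix.mulVec, proj, Matrix.single, kroneckerMap_apply,
    Fintype.sum_prod_type, ite_and, mul_ite, ite_mul, mul_zero, zero_mul,
    Finset.sum_ite_eq, Finset.sum_ite_eq', Pi.star_apply]

lemma conj_mul_self (z : ℂ) : (starRingEnd ℂ) z * z = ((‖z‖ ^ 2 : ℝ) : ℂ) := by
  rw [mul_comm, Complex.mul_conj, Complex.sq_norm]

lemma sum_proj_kron {n : ℕ} :
    ∑ p : Fin n × Fin n, (proj p.1 ⊗ₖ proj p.2)
      = (1 : Matrix (Fin n × Fin n) (Fin n × Fin n) ℂ) := by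
  ext p q
  simp [Matrix.sum_apply, proj, Matrix.single, kroneckerMap_apply, Fintype.sum_prod_type,
    ite_and, mul_ite, ite_mul, mul_zero, zero_mul, Finset.sum_ite_eq, Matrix.one_apply,
    Prod.ext_iff, eq_comm]
  split_ifs <;> rfl

open Classical in
lemma povm_sum {n : ℕ} (A : Matrix (Fin n) (Fin n) ℂ) (σ : Equiv.Perm (Fin n)) :
    ∑ i, ∑ j, locMeas A σ i j = 1 := by
  classical
  set cond : Fin n × Fin n → Prop := fun p =>
    if p.1 < p.2 then ‖A p.2 p.1‖ ≤ ‖A p.1 p.2‖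
    else ‖A p.1 p.2‖ ≤ ‖A p.2 p.1‖ with hcond
  set e : Fin n × Fin n → Fin n × Fin n := fun p => if cond p then p else p.swap with he
  have hcs : ∀ p : Fin n × Fin n, p.1 ≠ p.2 → (cond p.swap ↔ cond p) := by
    rintro ⟨i, j⟩ hij
    rcases lt_or_gt_of_ne hij with h | h
    · simp [hcond, h, not_lt_of_gt h, le_of_lt h]
    · simp [hcond, h, not_lt_of_gt h, le_of_lt h]
  have hee : ∀ p : Fin n × Fin n, p.1 ≠ p.2 → e (e p) = p := by
    intro p hp
    by_cases h : cond p
    · simp [he, h]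
    · have h2 : ¬ cond p.swap := fun hc => h ((hcs p hp).mp hc)
      simp [he, h, h2]
  have hloc : ∀ p : Fin n × Fin n, p.1 ≠ p.2 →
      locMeas A σ p.1 p.2 = proj (e p).1 ⊗ₖ proj (e p).2 := by
    rintro ⟨i, j⟩ hij
    rcases lt_or_gt_of_ne hij with h | h
    · by_cases hc : ‖A j i‖ ≤ ‖A i j‖ <;>
        simp [locMeas, he, hcond, hij, h, hc, not_lt_of_gt h, Prod.swap]
    · by_cases hc : ‖A i j‖ ≤ ‖A j i‖ <;>
        simp [locMeas, he, hcond, hij, (hij : i ≠ j), h, hc, not_lt_of_gt h, ne_of_gt h,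
          Prod.swap]
  calc ∑ i, ∑ j, locMeas A σ i j
      = ∑ p ∈ Finset.univ ×ˢ Finset.univ, locMeas A σ p.1 p.2 := by
        rw [Finset.sum_product]
    _ = ∑ p ∈ (Finset.univ : Finset (Fin n)).diag, locMeas A σ p.1 p.2
        + ∑ p ∈ (Finset.univ : Finset (Fin n)).offDiag, locMeas A σ p.1 p.2 := by
        rw [← Finset.sum_union (Finset.disjoint_diag_offDiag _), Finset.diag_union_offDiag]
    _ = ∑ p ∈ (Finset.univ : Finset (Fin n)).diag, (proj p.1 ⊗ₖ proj p.2)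
        + ∑ p ∈ (Finset.univ : Finset (Fin n)).offDiag, (proj p.1 ⊗ₖ proj p.2) := by
        congr 1
        · rw [Finset.sum_diag, Finset.sum_diag]
          simp only [locMeas, if_pos rfl]
          exact (Equiv.sum_comp σ (fun k => proj k ⊗ₖ proj k)).symm ▸
            (Finset.sum_congr rfl (fun i _ => rfl)) |>.trans
            (Equiv.sum_comp σ (fun k => proj k ⊗ₖ proj k))
        · refine Finset.sum_nbij' e e ?_ ?_ ?_ ?_ ?_
          · intro p hp
            rw [Finset.mem_offDiag] at hp ⊢
            refine ⟨Finset.mem_univ _, Finset.mem_univ _, ?_⟩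
            by_cases h : cond p <;> simp [he, h] <;> [exact hp.2.2; exact (Ne.symm hp.2.2)]
          · intro p hp
            rw [Finset.mem_offDiag] at hp ⊢
            refine ⟨Finset.mem_univ _, Finset.mem_univ _, ?_⟩
            by_cases h : cond p <;> simp [he, h] <;> [exact hp.2.2; exact (Ne.symm hp.2.2)]
          · intro p hp
            exact hee p (Finset.mem_offDiag.mp hp).2.2
          · intro p hp
            exact hee p (Finset.mem_offDiag.mp hp).2.2
          · intro p hp
            exact hloc p (Finset.mem_offDiag.mp hp).2.2
    _ = ∑ p ∈ Finset.univ ×ˢ Finset.univ, (proj p.1 ⊗ₖ proj p.2) := by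
        rw [← Finset.sum_union (Finset.disjoint_diag_offDiag _), Finset.diag_union_offDiag]
    _ = 1 := by rw [Finset.univ_product_univ]; exact sum_proj_kron

lemma diag_inner {n : ℕ} (U A : Matrix (Fin n) (Fin n) ℂ) (σ : Equiv.Perm (Fin n)) (i : Fin n) :
    star (ldoiBasis U A i i) ⬝ᵥ (locMeas A σ i i *ᵥ ldoiBasis U A i i) =
      ((‖U i (σ i)‖ ^ 2 : ℝ) : ℂ) := by
  have h : locMeas A σ i i = proj (σ i) ⊗ₖ proj (σ i) := by simp [locMeas]
  rw [h, quad]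
  have h2 : ldoiBasis U A i i (σ i, σ i) = U i (σ i) := by simp [ldoiBasis]
  rw [h2, conj_mul_self]

lemma offdiag_inner {n : ℕ} (U A : Matrix (Fin n) (Fin n) ℂ) (σ : Equiv.Perm (Fin n))
    (i j : Fin n) (hij : i ≠ j) :
    star (ldoiBasis U A i j) ⬝ᵥ (locMeas A σ i j *ᵥ ldoiBasis U A i j) =
      ((max (‖A i j‖ ^ 2) (‖A j i‖ ^ 2) : ℝ) : ℂ) := by
  have hij' : j ≠ i := hij.symm
  rcases lt_or_gt_of_ne hij with h | h
  · by_cases hc : ‖A j i‖ ≤ ‖A i j‖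
    · have hl : locMeas A σ i j = proj i ⊗ₖ proj j := by simp [locMeas, hij, h, hc]
      rw [hl, quad]
      have hv : ldoiBasis U A i j (i, j) = A i j := by simp [ldoiBasis, hij, h]
      rw [hv, conj_mul_self]
      rw [max_eq_left (pow_le_pow_left₀ (norm_nonneg _) hc 2)]
    · have hl : locMeas A σ i j = proj j ⊗ₖ proj i := by simp [locMeas, hij, h, hc]
      rw [hl, quad]
      have hv : ldoiBasis U A i j (j, i) = (starRingEnd ℂ) (A j i) := by
        simp [ldoiBasis, hij, h, Prod.ext_iff, hij']
      rw [hv, conj_mul_self]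
      rw [max_eq_right (le_of_lt (pow_lt_pow_left₀ (lt_of_not_ge hc) (norm_nonneg _)
        two_ne_zero))]
      simp [Complex.norm_conj]
  · have hnl : ¬ i < j := not_lt_of_gt h
    by_cases hc : ‖A i j‖ ≤ ‖A j i‖
    · have hl : locMeas A σ i j = proj i ⊗ₖ proj j := by simp [locMeas, hij, hnl, hc]
      rw [hl, quad]
      have hv : ldoiBasis U A i j (i, j) = -(starRingEnd ℂ) (A j i) := by
        simp [ldoiBasis, hij, hnl, Prod.ext_iff, hij']
      rw [hv, conj_mul_self]
      rw [max_eq_right (pow_le_pow_left₀ (norm_nonneg _) hc 2)]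
      simp [Complex.norm_conj]
    · have hl : locMeas A σ i j = proj j ⊗ₖ proj i := by simp [locMeas, hij, hnl, hc]
      rw [hl, quad]
      have hv : ldoiBasis U A i j (j, i) = A i j := by simp [ldoiBasis, hij, hnl]
      rw [hv, conj_mul_self]
      rw [max_eq_left (le_of_lt (pow_lt_pow_left₀ (lt_of_not_ge hc) (norm_nonneg _)
        two_ne_zero))]

/-- The local measurement `locMeas` is a POVM of Kronecker products of positive semidefinite
matrices (hence separable), it identifies `φ_{i,i}` with probability `|u_{i,σ(i)}|²` and
`φ_{i,j}` (`i ≠ j`) with probability `max{|a_{i,j}|², |a_{j,i}|²}`, and its success probability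
for the uniform ensemble is
`(1/n²)(∑_{i≠j} max{|a_{i,j}|², |a_{j,i}|²} + ∑_i |u_{i,σ(i)}|²)`. -/
theorem locMeas_success (n : ℕ) (hn : 2 ≤ n) (U A : Matrix (Fin n) (Fin n) ℂ)
    (hU : Uᴴ * U = 1)
    (hA : ∀ i j : Fin n, i ≠ j → ‖A i j‖ ^ 2 + ‖A j i‖ ^ 2 = 1)
    (σ : Equiv.Perm (Fin n)) :
    (∑ i, ∑ j, locMeas A σ i j = 1) ∧
    (∀ i j : Fin n, ∃ Q R : Matrix (Fin n) (Fin n) ℂ,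
      Q.PosSemidef ∧ R.PosSemidef ∧ locMeas A σ i j = Q ⊗ₖ R) ∧
    (∀ i : Fin n,
      star (ldoiBasis U A i i) ⬝ᵥ (locMeas A σ i i *ᵥ ldoiBasis U A i i) =
        ((‖U i (σ i)‖ ^ 2 : ℝ) : ℂ)) ∧
    (∀ i j : Fin n, i ≠ j →
      star (ldoiBasis U A i j) ⬝ᵥ (locMeas A σ i j *ᵥ ldoiBasis U A i j) =
        ((max (‖A i j‖ ^ 2) (‖A j i‖ ^ 2) : ℝ) : ℂ)) ∧
    ((1 / (n : ℝ) ^ 2) *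
        ∑ i, ∑ j, (star (ldoiBasis U A i j) ⬝ᵥ (locMeas A σ i j *ᵥ ldoiBasis U A i j)).re =
      (1 / (n : ℝ) ^ 2) *
        ((∑ i, ∑ j, if i = j then 0 else
            max (‖A i j‖ ^ 2) (‖A j i‖ ^ 2)) +
          ∑ i, ‖U i (σ i)‖ ^ 2)) := by
  
  refine ⟨povm_sum A σ, ?_, diag_inner U A σ, offdiag_inner U A σ, ?_⟩
  · intro i j
    unfold locMeas
    split_ifs with h1 h2 h3 h4 <;>
      exact ⟨_, _, proj_posSemidef _, proj_posSemidef _, rfl⟩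
  · congr 1
    have key : ∀ i j : Fin n,
        (star (ldoiBasis U A i j) ⬝ᵥ (locMeas A σ i j *ᵥ ldoiBasis U A i j)).re
          = (if i = j then 0 else
              max (‖A i j‖ ^ 2) (‖A j i‖ ^ 2))
            + (if i = j then ‖U i (σ i)‖ ^ 2 else 0) := by
      intro i j
      by_cases h : i = j
      · subst h
        rw [diag_inner U A σ i, Complex.ofReal_re]
        simp
      · rw [offdiag_inner U A σ i j h, Complex.ofReal_re]
        simp [h]
    calc ∑ i, ∑ j, (star (ldoiBasis U A i j) ⬝ᵥ (locMeas A σ i j *ᵥ ldoiBasis U A i j)).re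
        = ∑ i, ∑ j, ((if i = j then 0 else
              max (‖A i j‖ ^ 2) (‖A j i‖ ^ 2))
            + (if i = j then ‖U i (σ i)‖ ^ 2 else 0)) := by
          exact Finset.sum_congr rfl fun i _ => Finset.sum_congr rfl fun j _ => key i j
      _ = (∑ i, ∑ j, if i = j then 0 else
              max (‖A i j‖ ^ 2) (‖A j i‖ ^ 2))
          + ∑ i, ‖U i (σ i)‖ ^ 2 := by
          have hrow : ∀ i : Fin n,
              ∑ j, ((if i = j then 0 else
                  max (‖A i j‖ ^ 2) (‖A j i‖ ^ 2))
                + (if i = j then ‖U i (σ i)‖ ^ 2 else 0))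
              = (∑ j, if i = j then 0 else
                  max (‖A i j‖ ^ 2) (‖A j i‖ ^ 2))
                + ‖U i (σ i)‖ ^ 2 := by
            intro i
            rw [Finset.sum_add_distrib]
            congr 1
            simp
          rw [Finset.sum_congr rfl (fun i _ => hrow i), Finset.sum_add_distrib]
end

section
/- Let c_1,…,c_n be real numbers such that c_i ≥ max_{1≤k≤n} |u_{k,i}|² for all i and c_i·c_j ≥ |a_{i,j}|²·|a_{j,i}|² for all i < j. Then every PPT POVM (P_{i,j})_{1≤i,j≤n} satisfies (1/n²) ∑_{i,j=1}^n ⟨φ_{i,j}, P_{i,j} φ_{i,j}⟩ ≤ (1/n²)·(∑_{i≠j} max{|a_{i,j}|², |a_{j,i}|²} + ∑_{i=1}^n c_i). -/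
open Matrix Kronecker BigOperators
open scoped ComplexOrder

/- ### Auxiliary lemmas -/

lemma quad_two {m : Type*} [Fintype m] [DecidableEq m] {S : Matrix m m ℂ}
    (hS : S.PosSemidef) (p q : m) (w₁ w₂ : ℂ) :
    0 ≤ (starRingEnd ℂ w₁ * (S p p * w₁) + starRingEnd ℂ w₁ * (S p q * w₂)
        + starRingEnd ℂ w₂ * (S q p * w₁) + starRingEnd ℂ w₂ * (S q q * w₂)).re := by
  have h := hS.dotProduct_mulVec_nonneg (Pi.single p w₁ + Pi.single q w₂)
  have hre := (Complex.le_def.mp h).1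
  simp only [Complex.zero_re] at hre
  have key : star (Pi.single p w₁ + Pi.single q w₂) ⬝ᵥ
      (S *ᵥ (Pi.single p w₁ + Pi.single q w₂)) =
      starRingEnd ℂ w₁ * (S p p * w₁) + starRingEnd ℂ w₁ * (S p q * w₂)
        + starRingEnd ℂ w₂ * (S q p * w₁) + starRingEnd ℂ w₂ * (S q q * w₂) := by
    have hx : ∀ r, (Pi.single p w₁ + Pi.single q w₂ : m → ℂ) r
        = (if r = p then w₁ else 0) + (if r = q then w₂ else 0) := by
      intro r; simp [Pi.single_apply]
    simp only [dotProduct, mulVec, dotProduct, hx, Pi.star_apply, star_add, star_zero,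
      apply_ite (star : ℂ → ℂ), star_zero, map_zero, mul_add, add_mul, ite_mul, mul_ite,
      mul_zero, zero_mul, zero_add, add_zero, Finset.sum_add_distrib,
      Finset.sum_ite_eq', Finset.mem_univ, if_true]
    simp only [Complex.star_def]; ring
  rw [key] at hre
  exact hre

lemma diag_re_nonneg {m : Type*} [Fintype m] [DecidableEq m] {S : Matrix m m ℂ}
    (hS : S.PosSemidef) (p : m) : 0 ≤ (S p p).re := by
  have h := (Complex.le_def.mp (hS.dotProduct_mulVec_nonneg (Pi.single p 1))).1
  simp only [Complex.zero_re] at h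
  have key : star (Pi.single p 1 : m → ℂ) ⬝ᵥ (S *ᵥ Pi.single p 1) = S p p := by
    simp [dotProduct, mulVec, Pi.single_apply, apply_ite (star : ℂ → ℂ),
      ite_mul, mul_ite, mul_zero, zero_mul, Finset.sum_ite_eq']
  rw [key] at h
  exact h

lemma re_cross_le {m : Type*} [Fintype m] [DecidableEq m] {S : Matrix m m ℂ}
    (hS : S.PosSemidef) (p q : m) (z : ℂ) {α β : ℝ} (hα : 0 ≤ α) (hβ : 0 ≤ β)
    (hz : ‖z‖ ^ 2 ≤ α * β) :
    (z * S p q).re ≤ (α * (S p p).re + β * (S q q).re) / 2 := by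
  have hspp := diag_re_nonneg hS p
  have hsqq := diag_re_nonneg hS q
  rcases eq_or_lt_of_le hβ with hβ0 | hβpos
  · have hz0 : z = 0 := by
      have h1 : ‖z‖ ^ 2 ≤ 0 := by rw [← hβ0] at hz; simpa using hz
      have h2 : ‖z‖ = 0 := by nlinarith [norm_nonneg z]
      simpa using h2
    rw [hz0]
    simp only [zero_mul, Complex.zero_re]
    positivity
  · have hqp : S q p = starRingEnd ℂ (S p q) := by
      simpa using (hS.1.apply q p).symm
    have h := quad_two hS p q (-(starRingEnd ℂ z)) ((β : ℝ) : ℂ)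
    have keyeq : starRingEnd ℂ (-(starRingEnd ℂ z)) * (S p p * -(starRingEnd ℂ z))
        + starRingEnd ℂ (-(starRingEnd ℂ z)) * (S p q * ((β : ℝ) : ℂ))
        + starRingEnd ℂ ((β : ℝ) : ℂ) * (S q p * -(starRingEnd ℂ z))
        + starRingEnd ℂ ((β : ℝ) : ℂ) * (S q q * ((β : ℝ) : ℂ))
        = ((Complex.normSq z : ℝ) : ℂ) * S p p
          + ((β : ℝ) : ℂ) * (-(z * S p q)) + ((β : ℝ) : ℂ) * starRingEnd ℂ (-(z * S p q))
          + (((β ^ 2 : ℝ)) : ℂ) * S q q := by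
      rw [hqp]
      push_cast
      simp only [map_neg, Complex.conj_conj, Complex.conj_ofReal, _root_.map_mul]
      rw [← Complex.mul_conj]
      ring
    rw [keyeq] at h
    have hre : 0 ≤ Complex.normSq z * (S p p).re
        - β * (z.re * (S p q).re - z.im * (S p q).im)
        - β * (z.re * (S p q).re - z.im * (S p q).im) + β ^ 2 * (S q q).re := by
      have := h
      simp only [Complex.add_re, Complex.re_ofReal_mul, Complex.neg_re, Complex.conj_re,
        Complex.mul_re, Complex.ofReal_re, Complex.ofReal_im] at this
      nlinarith [this]
    have habs : ‖z‖ ^ 2 = Complex.normSq z := Complex.sq_norm z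
    rw [Complex.mul_re]
    nlinarith [hre, mul_le_mul_of_nonneg_right hz hspp, hβpos,
      mul_pos hβpos hβpos, sq_nonneg β]

lemma dot_off {m : Type*} [Fintype m] [DecidableEq m] (M : Matrix m m ℂ)
    {r s : m} (hrs : r ≠ s) (x y : ℂ) :
    (star (fun p => if p = r then x else if p = s then y else 0) ⬝ᵥ
      (M *ᵥ (fun p => if p = r then x else if p = s then y else 0))) =
    starRingEnd ℂ x * (M r r * x) + starRingEnd ℂ x * (M r s * y)
      + starRingEnd ℂ y * (M s r * x) + starRingEnd ℂ y * (M s s * y) := by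
  have hx : ∀ p, (if p = r then x else if p = s then y else 0)
      = (if p = r then x else 0) + (if p = s then y else 0) := by
    intro p
    by_cases h1 : p = r
    · subst h1; simp [hrs]
    · simp [h1]
  simp only [dotProduct, mulVec, dotProduct, hx, Pi.star_apply, star_add,
    apply_ite (star : ℂ → ℂ), star_zero, mul_add, add_mul, ite_mul, mul_ite,
    mul_zero, zero_mul, zero_add, add_zero, Finset.sum_add_distrib,
    Finset.sum_ite_eq', Finset.mem_univ, if_true]
  simp only [Complex.star_def]; ring

lemma dot_diag {n : ℕ} (M : Matrix (Fin n × Fin n) (Fin n × Fin n) ℂ)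
    (u : Fin n → ℂ) :
    (star (fun p : Fin n × Fin n => if p.1 = p.2 then u p.1 else 0) ⬝ᵥ
      (M *ᵥ (fun p : Fin n × Fin n => if p.1 = p.2 then u p.1 else 0))) =
    ∑ k, ∑ l, starRingEnd ℂ (u k) * (M (k, k) (l, l) * u l) := by
  simp only [dotProduct, mulVec, dotProduct, Pi.star_apply,
    apply_ite (star : ℂ → ℂ), star_zero, ite_mul, mul_ite, mul_zero, zero_mul,
    Fintype.sum_prod_type, Finset.sum_ite_eq, Finset.mem_univ, if_true,
    Finset.mul_sum, Complex.star_def]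
  congr 1
  funext k
  rw [Finset.sum_comm]
  simp [Finset.sum_ite_eq]

/-- Off-diagonal key bound. -/
lemma off_key {n : ℕ} (M : Matrix (Fin n × Fin n) (Fin n × Fin n) ℂ)
    (hS : (ptranspose M).PosSemidef) (F : Fin n × Fin n → ℝ) (hF0 : ∀ p, 0 ≤ F p)
    (i j : Fin n) (hij : i ≠ j) (x y : ℂ)
    (hx : Complex.normSq x ≤ F (i, j)) (hy : Complex.normSq y ≤ F (j, i))
    (hxy : Complex.normSq x * Complex.normSq y ≤ F (i, i) * F (j, j)) :
    (star (fun p => if p = (i, j) then x else if p = (j, i) then y else 0) ⬝ᵥ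
      (M *ᵥ (fun p => if p = (i, j) then x else if p = (j, i) then y else 0))).re ≤
    ∑ p : Fin n × Fin n, F p * ((ptranspose M) p p).re := by
  have hrs : ((i, j) : Fin n × Fin n) ≠ (j, i) := by
    intro h; exact hij (congrArg Prod.fst h)
  rw [dot_off M hrs x y]
  set S := ptranspose M with hSdef
  have hMS : ∀ a b u v : Fin n, M (a, b) (u, v) = S (u, b) (a, v) := fun a b u v => rfl
  have hSre : ∀ p, 0 ≤ (S p p).re := fun p => diag_re_nonneg hS p
  -- term 1
  have h1 : (starRingEnd ℂ x * (M (i, j) (i, j) * x)).re ≤ F (i, j) * (S (i, j) (i, j)).re := by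
    have e : starRingEnd ℂ x * (M (i, j) (i, j) * x)
        = ((Complex.normSq x : ℝ) : ℂ) * S (i, j) (i, j) := by
      rw [hMS, ← Complex.mul_conj]; ring
    rw [e, Complex.re_ofReal_mul]
    exact mul_le_mul_of_nonneg_right hx (hSre _) |>.trans_eq rfl
  -- term 4
  have h4 : (starRingEnd ℂ y * (M (j, i) (j, i) * y)).re ≤ F (j, i) * (S (j, i) (j, i)).re := by
    have e : starRingEnd ℂ y * (M (j, i) (j, i) * y)
        = ((Complex.normSq y : ℝ) : ℂ) * S (j, i) (j, i) := by
      rw [hMS, ← Complex.mul_conj]; ring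
    rw [e, Complex.re_ofReal_mul]
    exact mul_le_mul_of_nonneg_right hy (hSre _)
  -- term 2
  have h2 : (starRingEnd ℂ x * (M (i, j) (j, i) * y)).re ≤
      (F (j, j) * (S (j, j) (j, j)).re + F (i, i) * (S (i, i) (i, i)).re) / 2 := by
    have e : starRingEnd ℂ x * (M (i, j) (j, i) * y)
        = (starRingEnd ℂ x * y) * S (j, j) (i, i) := by rw [hMS]; ring
    rw [e]
    refine re_cross_le hS (j, j) (i, i) _ (hF0 _) (hF0 _) ?_
    rw [Complex.sq_norm, Complex.normSq_mul, Complex.normSq_conj]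
    calc Complex.normSq x * Complex.normSq y ≤ F (i, i) * F (j, j) := hxy
      _ = F (j, j) * F (i, i) := mul_comm _ _
  -- term 3
  have h3 : (starRingEnd ℂ y * (M (j, i) (i, j) * x)).re ≤
      (F (i, i) * (S (i, i) (i, i)).re + F (j, j) * (S (j, j) (j, j)).re) / 2 := by
    have e : starRingEnd ℂ y * (M (j, i) (i, j) * x)
        = (starRingEnd ℂ y * x) * S (i, i) (j, j) := by rw [hMS]; ring
    rw [e]
    refine re_cross_le hS (i, i) (j, j) _ (hF0 _) (hF0 _) ?_
    rw [Complex.sq_norm, Complex.normSq_mul, Complex.normSq_conj]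
    calc Complex.normSq y * Complex.normSq x
        = Complex.normSq x * Complex.normSq y := mul_comm _ _
      _ ≤ F (i, i) * F (j, j) := hxy
  have hfour : (starRingEnd ℂ x * (M (i, j) (i, j) * x) + starRingEnd ℂ x * (M (i, j) (j, i) * y)
      + starRingEnd ℂ y * (M (j, i) (i, j) * x) + starRingEnd ℂ y * (M (j, i) (j, i) * y)).re ≤
      F (i, j) * (S (i, j) (i, j)).re + F (j, i) * (S (j, i) (j, i)).re
        + F (i, i) * (S (i, i) (i, i)).re + F (j, j) * (S (j, j) (j, j)).re := by
    simp only [Complex.add_re]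
    linarith [h1, h2, h3, h4]
  refine hfour.trans ?_
  have hsub : ({(i, j), (j, i), (i, i), (j, j)} : Finset (Fin n × Fin n)) ⊆ Finset.univ :=
    Finset.subset_univ _
  have hdist : (({(i, j), (j, i), (i, i), (j, j)} : Finset (Fin n × Fin n)).sum
      fun p => F p * (S p p).re)
      = F (i, j) * (S (i, j) (i, j)).re + F (j, i) * (S (j, i) (j, i)).re
        + F (i, i) * (S (i, i) (i, i)).re + F (j, j) * (S (j, j) (j, j)).re := by
    rw [Finset.sum_insert, Finset.sum_insert, Finset.sum_insert, Finset.sum_singleton]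
    · ring
    · simp [Prod.ext_iff, hij]
    · simp [Prod.ext_iff, hij, hij.symm]
    · simp [Prod.ext_iff, hij, hij.symm]
  rw [← hdist]
  exact Finset.sum_le_sum_of_subset_of_nonneg hsub
    (fun p _ _ => mul_nonneg (hF0 p) (hSre p))

/-- Diagonal key bound. -/
lemma diag_key {n : ℕ} (M : Matrix (Fin n × Fin n) (Fin n × Fin n) ℂ)
    (hS : (ptranspose M).PosSemidef) (F : Fin n × Fin n → ℝ) (hF0 : ∀ p, 0 ≤ F p)
    (u : Fin n → ℂ)
    (hdiag : ∀ k, Complex.normSq (u k) ≤ F (k, k))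
    (hoff : ∀ k l, k ≠ l → Complex.normSq (u k) * Complex.normSq (u l) ≤ F (l, k) * F (k, l)) :
    (star (fun p : Fin n × Fin n => if p.1 = p.2 then u p.1 else 0) ⬝ᵥ
      (M *ᵥ (fun p : Fin n × Fin n => if p.1 = p.2 then u p.1 else 0))).re ≤
    ∑ p : Fin n × Fin n, F p * ((ptranspose M) p p).re := by
  rw [dot_diag M u]
  set S := ptranspose M with hSdef
  have hMS : ∀ a b u' v : Fin n, M (a, b) (u', v) = S (u', b) (a, v) := fun a b u' v => rfl
  have hSre : ∀ p, 0 ≤ (S p p).re := fun p => diag_re_nonneg hS p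
  have hterm : ∀ k l : Fin n, (starRingEnd ℂ (u k) * (M (k, k) (l, l) * u l)).re ≤
      (F (l, k) * (S (l, k) (l, k)).re + F (k, l) * (S (k, l) (k, l)).re) / 2 := by
    intro k l
    by_cases hkl : k = l
    · subst hkl
      have e : starRingEnd ℂ (u k) * (M (k, k) (k, k) * u k)
          = ((Complex.normSq (u k) : ℝ) : ℂ) * S (k, k) (k, k) := by
        rw [hMS, ← Complex.mul_conj]; ring
      rw [e, Complex.re_ofReal_mul]
      have := mul_le_mul_of_nonneg_right (hdiag k) (hSre (k, k))
      linarith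
    · have e : starRingEnd ℂ (u k) * (M (k, k) (l, l) * u l)
          = (starRingEnd ℂ (u k) * u l) * S (l, k) (k, l) := by rw [hMS]; ring
      rw [e]
      refine re_cross_le hS (l, k) (k, l) _ (hF0 _) (hF0 _) ?_
      rw [Complex.sq_norm, Complex.normSq_mul, Complex.normSq_conj]
      exact hoff k l hkl
  calc (∑ k, ∑ l, starRingEnd ℂ (u k) * (M (k, k) (l, l) * u l)).re
      = ∑ k, ∑ l, (starRingEnd ℂ (u k) * (M (k, k) (l, l) * u l)).re := by
        rw [Complex.re_sum]; exact Finset.sum_congr rfl fun k _ => Complex.re_sum _ _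
    _ ≤ ∑ k, ∑ l, (F (l, k) * (S (l, k) (l, k)).re + F (k, l) * (S (k, l) (k, l)).re) / 2 :=
        Finset.sum_le_sum fun k _ => Finset.sum_le_sum fun l _ => hterm k l
    _ = ∑ p : Fin n × Fin n, F p * (S p p).re := by
        have hsplit : ∑ k, ∑ l, (F (l, k) * (S (l, k) (l, k)).re
            + F (k, l) * (S (k, l) (k, l)).re) / 2
            = ((∑ k, ∑ l, F (l, k) * (S (l, k) (l, k)).re)
              + (∑ k, ∑ l, F (k, l) * (S (k, l) (k, l)).re)) / 2 := by
          rw [← Finset.sum_add_distrib]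
          rw [Finset.sum_div]
          refine Finset.sum_congr rfl fun k _ => ?_
          rw [← Finset.sum_add_distrib, Finset.sum_div]
        rw [hsplit, Finset.sum_comm (f := fun k l => F (l, k) * (S (l, k) (l, k)).re)]
        rw [Fintype.sum_prod_type]
        ring

/-- PPT upper bound: if `c_i ≥ max_k |u_{k,i}|²` for all `i` and
`c_i c_j ≥ |a_{i,j}|² |a_{j,i}|²` for all `i < j`, then every PPT POVM distinguishing the
uniform ensemble over the orthonormal LDOI basis has success probability at most
`(1/n²)(∑_{i≠j} max{|a_{i,j}|², |a_{j,i}|²} + ∑_i c_i)`. -/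
theorem ppt_upper_bound (n : ℕ) (hn : 2 ≤ n) (U A : Matrix (Fin n) (Fin n) ℂ)
    (hU : Uᴴ * U = 1)
    (hA : ∀ i j : Fin n, i ≠ j → ‖A i j‖ ^ 2 + ‖A j i‖ ^ 2 = 1)
    (c : Fin n → ℝ)
    (hc1 : ∀ i k : Fin n, ‖U k i‖ ^ 2 ≤ c i)
    (hc2 : ∀ i j : Fin n, i < j →
      ‖A i j‖ ^ 2 * ‖A j i‖ ^ 2 ≤ c i * c j)
    (P : Fin n → Fin n → Matrix (Fin n × Fin n) (Fin n × Fin n) ℂ)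
    (hPpsd : ∀ i j, (P i j).PosSemidef) (hPsum : ∑ i, ∑ j, P i j = 1)
    (hPppt : ∀ i j, (ptranspose (P i j)).PosSemidef) :
    (1 / (n : ℝ) ^ 2) *
        ∑ i, ∑ j, (star (ldoiBasis U A i j) ⬝ᵥ (P i j *ᵥ ldoiBasis U A i j)).re ≤
      (1 / (n : ℝ) ^ 2) *
        ((∑ i, ∑ j, if i = j then 0 else
            max (‖A i j‖ ^ 2) (‖A j i‖ ^ 2)) +
          ∑ i, c i) := by
  classical
  set mx : Fin n → Fin n → ℝ :=
    fun i j => max (‖A i j‖ ^ 2) (‖A j i‖ ^ 2) with hmx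
  set F : Fin n × Fin n → ℝ := fun p => if p.1 = p.2 then c p.1 else mx p.1 p.2 with hF
  have hc0 : ∀ i, 0 ≤ c i := fun i => le_trans (by positivity) (hc1 i i)
  have hmx0 : ∀ i j, 0 ≤ mx i j := fun i j => le_trans (by positivity) (le_max_left _ _)
  have hmxhalf : ∀ i j, i ≠ j → 1 / 2 ≤ mx i j := by
    intro i j hij
    have h := hA i j hij
    have h1 := le_max_left (‖A i j‖ ^ 2) (‖A j i‖ ^ 2)
    have h2 := le_max_right (‖A i j‖ ^ 2) (‖A j i‖ ^ 2)
    simp only [hmx]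
    linarith
  have hF0 : ∀ p, 0 ≤ F p := by
    intro p
    simp only [hF]
    split
    · exact hc0 _
    · exact hmx0 _ _
  -- row bound for U
  have hUU : U * Uᴴ = 1 := mul_eq_one_comm.mp hU
  have hrow : ∀ i, ∑ s, Complex.normSq (U i s) = 1 := by
    intro i
    have h := congrFun (congrFun hUU i) i
    rw [Matrix.mul_apply] at h
    simp only [Matrix.conjTranspose_apply, Matrix.one_apply_eq] at h
    have h2 : ∑ s, (Complex.normSq (U i s) : ℂ) = 1 := by
      rw [← h]
      refine Finset.sum_congr rfl fun s _ => ?_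
      rw [← Complex.mul_conj]
      rfl
    exact_mod_cast h2
  -- per-state key bound
  have key : ∀ i j, (star (ldoiBasis U A i j) ⬝ᵥ (P i j *ᵥ ldoiBasis U A i j)).re ≤
      ∑ p : Fin n × Fin n, F p * ((ptranspose (P i j)) p p).re := by
    intro i j
    by_cases hij : i = j
    · subst hij
      have hφ : ldoiBasis U A i i
          = fun p : Fin n × Fin n => if p.1 = p.2 then U i p.1 else 0 := by
        simp [ldoiBasis]
      rw [hφ]
      refine diag_key (P i i) (hPppt i i) F hF0 (U i) ?_ ?_
      · intro k
        have hFk : F (k, k) = c k := by simp [hF]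
        rw [hFk, ← Complex.sq_norm]
        exact hc1 k i
      · intro k l hkl
        have hFlk : F (l, k) = mx l k := by simp [hF, hkl.symm]
        have hFkl : F (k, l) = mx k l := by simp [hF, hkl]
        rw [hFlk, hFkl]
        have hsum : Complex.normSq (U i k) + Complex.normSq (U i l) ≤ 1 := by
          have hsub : (({k, l} : Finset (Fin n)).sum fun s => Complex.normSq (U i s))
              ≤ ∑ s, Complex.normSq (U i s) :=
            Finset.sum_le_sum_of_subset_of_nonneg (Finset.subset_univ _)
              (fun s _ _ => Complex.normSq_nonneg _)
          rw [Finset.sum_pair hkl, hrow i] at hsub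
          exact hsub
        have h14 : Complex.normSq (U i k) * Complex.normSq (U i l) ≤ 1 / 4 := by
          nlinarith [sq_nonneg (Complex.normSq (U i k) - Complex.normSq (U i l)),
            Complex.normSq_nonneg (U i k), Complex.normSq_nonneg (U i l), hsum]
        have hmm : 1 / 2 * (1 / 2) ≤ mx l k * mx k l :=
          mul_le_mul (hmxhalf l k (Ne.symm hkl)) (hmxhalf k l hkl) (by norm_num) (hmx0 l k)
        calc Complex.normSq (U i k) * Complex.normSq (U i l) ≤ 1 / 4 := h14
          _ = 1 / 2 * (1 / 2) := by norm_num
          _ ≤ mx l k * mx k l := hmm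
    · rcases lt_or_gt_of_ne hij with hlt | hgt
      · have hφ : ldoiBasis U A i j = fun p : Fin n × Fin n =>
            if p = (i, j) then A i j else if p = (j, i) then starRingEnd ℂ (A j i) else 0 := by
          simp [ldoiBasis, hij, hlt]
        rw [hφ]
        refine off_key (P i j) (hPppt i j) F hF0 i j hij _ _ ?_ ?_ ?_
        · have hFij : F (i, j) = mx i j := by simp [hF, hij]
          rw [hFij, ← Complex.sq_norm]
          exact le_max_left _ _
        · have hFji : F (j, i) = mx j i := by simp [hF, Ne.symm hij]
          rw [hFji, Complex.normSq_conj, ← Complex.sq_norm]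
          exact le_max_left _ _
        · have h1 : F (i, i) = c i := by simp [hF]
          have h2 : F (j, j) = c j := by simp [hF]
          rw [h1, h2, Complex.normSq_conj, ← Complex.sq_norm, ← Complex.sq_norm]
          exact hc2 i j hlt
      · have hφ : ldoiBasis U A i j = fun p : Fin n × Fin n =>
            if p = (j, i) then A i j else if p = (i, j) then -(starRingEnd ℂ (A j i)) else 0 := by
          simp [ldoiBasis, hij, not_lt_of_gt hgt]
        rw [hφ]
        refine off_key (P i j) (hPppt i j) F hF0 j i (Ne.symm hij) _ _ ?_ ?_ ?_
        · have hFji : F (j, i) = mx j i := by simp [hF, Ne.symm hij]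
          rw [hFji, ← Complex.sq_norm]
          exact le_max_right _ _
        · have hFij : F (i, j) = mx i j := by simp [hF, hij]
          rw [hFij, Complex.normSq_neg, Complex.normSq_conj, ← Complex.sq_norm]
          exact le_max_right _ _
        · have h1 : F (j, j) = c j := by simp [hF]
          have h2 : F (i, i) = c i := by simp [hF]
          rw [h1, h2, Complex.normSq_neg, Complex.normSq_conj,
            ← Complex.sq_norm, ← Complex.sq_norm]
          calc ‖A i j‖ ^ 2 * ‖A j i‖ ^ 2
              = ‖A j i‖ ^ 2 * ‖A i j‖ ^ 2 := mul_comm _ _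
            _ ≤ c j * c i := hc2 j i hgt
  -- summation
  have step1 : ∑ i, ∑ j, (star (ldoiBasis U A i j) ⬝ᵥ (P i j *ᵥ ldoiBasis U A i j)).re ≤
      ∑ i, ∑ j, ∑ p : Fin n × Fin n, F p * ((ptranspose (P i j)) p p).re :=
    Finset.sum_le_sum fun i _ => Finset.sum_le_sum fun j _ => key i j
  have step2 : ∑ i, ∑ j, ∑ p : Fin n × Fin n, F p * ((ptranspose (P i j)) p p).re
      = ∑ p : Fin n × Fin n, F p := by
    calc ∑ i, ∑ j, ∑ p : Fin n × Fin n, F p * ((ptranspose (P i j)) p p).re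
        = ∑ i, ∑ p : Fin n × Fin n, ∑ j, F p * ((ptranspose (P i j)) p p).re :=
          Finset.sum_congr rfl fun i _ => Finset.sum_comm
      _ = ∑ p : Fin n × Fin n, ∑ i, ∑ j, F p * ((ptranspose (P i j)) p p).re :=
          Finset.sum_comm
      _ = ∑ p : Fin n × Fin n, F p := by
          refine Finset.sum_congr rfl fun p _ => ?_
          have hdiagpt : ∀ i j : Fin n, (ptranspose (P i j)) p p = P i j p p := by
            intro i j
            show P i j (p.1, p.2) (p.1, p.2) = P i j p p
            rw [Prod.mk.eta]
          have hone : (∑ i, ∑ j, P i j p p) = 1 := by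
            have h : (∑ i, ∑ j, P i j) p p = (1 : Matrix (Fin n × Fin n) (Fin n × Fin n) ℂ) p p := by
              rw [hPsum]
            simpa [Matrix.sum_apply, Matrix.one_apply_eq] using h
          have hsum1 : ∑ i, ∑ j, ((ptranspose (P i j)) p p).re = 1 := by
            simp only [hdiagpt]
            have : (∑ i, ∑ j, P i j p p).re = 1 := by rw [hone]; rfl
            rw [← this, Complex.re_sum]
            exact Finset.sum_congr rfl fun i _ => (Complex.re_sum _ _).symm
          calc ∑ i, ∑ j, F p * ((ptranspose (P i j)) p p).re
              = F p * ∑ i, ∑ j, ((ptranspose (P i j)) p p).re := by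
                rw [Finset.mul_sum]
                exact Finset.sum_congr rfl fun i _ => (Finset.mul_sum _ _ _).symm
            _ = F p := by rw [hsum1, mul_one]
  have hFsum : ∑ p : Fin n × Fin n, F p
      = (∑ i, ∑ j, if i = j then 0 else
          max (‖A i j‖ ^ 2) (‖A j i‖ ^ 2)) + ∑ i, c i := by
    rw [Fintype.sum_prod_type, ← Finset.sum_add_distrib]
    refine Finset.sum_congr rfl fun i _ => ?_
    have hj : ∀ j, F (i, j) = (if i = j then 0 else mx i j) + (if i = j then c i else 0) := by
      intro j; by_cases h : i = j <;> simp [hF, h]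
    rw [Finset.sum_congr rfl fun j _ => hj j, Finset.sum_add_distrib, Finset.sum_ite_eq]
    simp [hmx]
  refine mul_le_mul_of_nonneg_left ?_ (by positivity)
  calc ∑ i, ∑ j, (star (ldoiBasis U A i j) ⬝ᵥ (P i j *ᵥ ldoiBasis U A i j)).re
      ≤ ∑ i, ∑ j, ∑ p : Fin n × Fin n, F p * ((ptranspose (P i j)) p p).re := step1
    _ = ∑ p : Fin n × Fin n, F p := step2
    _ = (∑ i, ∑ j, if i = j then 0 else
          max (‖A i j‖ ^ 2) (‖A j i‖ ^ 2)) + ∑ i, c i := hFsum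
end

section
/- If some PPT POVM (P_{i,j})_{1≤i,j≤n} achieves perfect discrimination of the uniform ensemble over an orthonormal LDOI basis, i.e., (1/n²) ∑_{i,j=1}^n ⟨φ_{i,j}, P_{i,j} φ_{i,j}⟩ = 1, then every entry of U has magnitude 0 or 1 and max{|a_{i,j}|², |a_{j,i}|²} = 1 for all i ≠ j; that is, the basis consists entirely of product states. -/
open Matrix Kronecker BigOperators
open scoped ComplexOrder

section Helpers

lemma psd_dot_zero {m : Type*} [Fintype m] {Q : Matrix m m ℂ} (hQ : Q.PosSemidef)
    {x : m → ℂ} (hx : (star x ⬝ᵥ Q *ᵥ x).re = 0) : Q *ᵥ x = 0 := by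
  apply (hQ.dotProduct_mulVec_zero_iff x).mp
  have h0 := hQ.dotProduct_mulVec_nonneg x
  rw [Complex.le_def] at h0
  exact Complex.ext hx (by simpa using h0.2.symm)

lemma psd_entry_zero {m : Type*} [Fintype m] [DecidableEq m] {Q : Matrix m m ℂ}
    (hQ : Q.PosSemidef) {p : m} (hp : Q p p = 0) (q : m) : Q p q = 0 := by
  have hcol : Q *ᵥ Pi.single p 1 = 0 := by
    apply (hQ.dotProduct_mulVec_zero_iff _).mp
    simp [hp]
  have h1 : Q q p = 0 := by simpa using congrFun hcol q
  rw [← hQ.1.apply p q, h1, star_zero]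

lemma sum_two {ι : Type*} [Fintype ι] [DecidableEq ι] {a b : ι} (hab : a ≠ b)
    (f : ι → ℂ) (x y : ℂ) :
    ∑ p, f p * (if p = a then x else if p = b then y else 0) = f a * x + f b * y := by
  have h : ∀ p, f p * (if p = a then x else if p = b then y else 0)
      = (if a = p then f a * x else 0) + (if b = p then f b * y else 0) := by
    intro p
    rcases eq_or_ne p a with rfl | h1
    · simp [hab.symm, Ne.symm hab]
    · rcases eq_or_ne p b with rfl | h2
      · simp [h1, Ne.symm h1]
      · simp [h1, h2, Ne.symm h1, Ne.symm h2]
  simp only [h, Finset.sum_add_distrib, Finset.sum_ite_eq, Finset.mem_univ, if_true]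

lemma sum_diag {n : ℕ} (f : Fin n × Fin n → ℂ) (g : Fin n → ℂ) :
    ∑ p : Fin n × Fin n, f p * (if p.1 = p.2 then g p.1 else 0) = ∑ k, f (k, k) * g k := by
  rw [Fintype.sum_prod_type]
  simp [mul_ite, mul_zero, Finset.sum_ite_eq]

lemma mulVec_two {m : Type*} [Fintype m] [DecidableEq m] {a b : m} (hab : a ≠ b)
    (M : Matrix m m ℂ) (x y : ℂ) (q : m) :
    (M *ᵥ fun p => if p = a then x else if p = b then y else 0) q
      = M q a * x + M q b * y := by
  simp only [Matrix.mulVec, dotProduct]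
  exact sum_two hab (fun p => M q p) x y

lemma mulVec_diag {n : ℕ} (M : Matrix (Fin n × Fin n) (Fin n × Fin n) ℂ) (g : Fin n → ℂ)
    (q : Fin n × Fin n) :
    (M *ᵥ fun p => if p.1 = p.2 then g p.1 else 0) q = ∑ k, M q (k, k) * g k := by
  simp only [Matrix.mulVec, dotProduct]
  exact sum_diag (fun p => M q p) g

variable {n : ℕ} {U A : Matrix (Fin n) (Fin n) ℂ}

lemma ldoi_diag (i : Fin n) :
    ldoiBasis U A i i = fun p => if p.1 = p.2 then U i p.1 else 0 := by
  simp [ldoiBasis]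

lemma ldoi_lt {i j : Fin n} (h : i < j) :
    ldoiBasis U A i j = fun p =>
      if p = (i, j) then A i j else if p = (j, i) then (starRingEnd ℂ) (A j i) else 0 := by
  simp [ldoiBasis, h.ne, h]

lemma ldoi_gt {i j : Fin n} (h : j < i) :
    ldoiBasis U A i j = fun p =>
      if p = (j, i) then A i j else if p = (i, j) then -(starRingEnd ℂ) (A j i) else 0 := by
  simp [ldoiBasis, h.ne', not_lt_of_gt h]

lemma pair_ne {i j : Fin n} (h : i ≠ j) : ((i, j) : Fin n × Fin n) ≠ (j, i) :=
  fun hp => h (congrArg Prod.fst hp)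

lemma pair_ne_diag {i j k : Fin n} (h : i ≠ j) : ((i, j) : Fin n × Fin n) ≠ (k, k) :=
  fun hp => h ((congrArg Prod.fst hp).trans (congrArg Prod.snd hp).symm)

lemma diag_pair_ne {i m : Fin n} (h : i ≠ m) : ((i, i) : Fin n × Fin n) ≠ (m, m) :=
  fun hp => h (congrArg Prod.fst hp)

lemma sum_mulVec' {ι m : Type*} [Fintype ι] [Fintype m] (M : ι → Matrix m m ℂ) (v : m → ℂ) :
    (∑ i, M i) *ᵥ v = ∑ i, M i *ᵥ v := by
  ext q
  simp only [Matrix.mulVec, dotProduct, Finset.sum_apply, Matrix.sum_apply,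
    Finset.sum_mul]
  rw [Finset.sum_comm]

lemma dot_sum {ι m : Type*} [Fintype ι] [Fintype m] (u : m → ℂ) (w : ι → (m → ℂ)) :
    u ⬝ᵥ (∑ i, w i) = ∑ i, u ⬝ᵥ w i := by
  simp only [dotProduct, Finset.sum_apply, Finset.mul_sum]
  rw [Finset.sum_comm]

lemma habC (hA : ∀ i j : Fin n, i ≠ j → ‖A i j‖ ^ 2 + ‖A j i‖ ^ 2 = 1)
    {i j : Fin n} (h : i ≠ j) :
    A i j * (starRingEnd ℂ) (A i j) + A j i * (starRingEnd ℂ) (A j i) = 1 := by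
  rw [Complex.mul_conj, Complex.mul_conj, ← Complex.ofReal_add]
  norm_cast
  simpa [Complex.sq_norm] using hA i j h

lemma ldoi_norm (hU' : U * Uᴴ = 1)
    (hA : ∀ i j : Fin n, i ≠ j → ‖A i j‖ ^ 2 + ‖A j i‖ ^ 2 = 1)
    (i j : Fin n) :
    star (ldoiBasis U A i j) ⬝ᵥ ldoiBasis U A i j = 1 := by
  rcases eq_or_ne i j with rfl | hij
  · rw [ldoi_diag]
    have h1 : (U * Uᴴ) i i = 1 := by rw [hU']; simp
    rw [Matrix.mul_apply] at h1
    simp only [dotProduct, Pi.star_apply, Complex.star_def,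
      apply_ite (starRingEnd ℂ), map_zero]
    rw [Fintype.sum_prod_type]
    simpa [mul_ite, ite_mul, Finset.sum_ite_eq, Matrix.conjTranspose_apply, mul_comm] using h1
  · rcases lt_or_gt_of_ne hij with h | h
    · rw [ldoi_lt h]
      simp only [dotProduct, Pi.star_apply, Complex.star_def,
        apply_ite (starRingEnd ℂ), map_zero]
      rw [show (fun p : Fin n × Fin n => (if p = ((i : Fin n), j) then (starRingEnd ℂ) (A i j)
            else if p = (j, i) then (starRingEnd ℂ) ((starRingEnd ℂ) (A j i)) else 0) *
            (if p = (i, j) then A i j else if p = (j, i) then (starRingEnd ℂ) (A j i) else 0))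
          = fun p => (fun q => if q = ((i : Fin n), j) then (starRingEnd ℂ) (A i j)
            else if q = (j, i) then (starRingEnd ℂ) ((starRingEnd ℂ) (A j i)) else 0) p *
            (if p = (i, j) then A i j else if p = (j, i) then (starRingEnd ℂ) (A j i) else 0)
          from rfl]
      rw [sum_two (pair_ne hij)]
      simp only [eq_self_iff_true, if_true, if_neg (pair_ne hij).symm,
        if_neg (pair_ne hij), Complex.conj_conj]
      have := habC hA hij
      linear_combination this
    · rw [ldoi_gt h]
      simp only [dotProduct, Pi.star_apply, Complex.star_def,
        apply_ite (starRingEnd ℂ), map_zero, map_neg]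
      rw [show (fun p : Fin n × Fin n => (if p = ((j : Fin n), i) then (starRingEnd ℂ) (A i j)
            else if p = (i, j) then -(starRingEnd ℂ) ((starRingEnd ℂ) (A j i)) else 0) *
            (if p = (j, i) then A i j else if p = (i, j) then -(starRingEnd ℂ) (A j i) else 0))
          = fun p => (fun q => if q = ((j : Fin n), i) then (starRingEnd ℂ) (A i j)
            else if q = (i, j) then -(starRingEnd ℂ) ((starRingEnd ℂ) (A j i)) else 0) p *
            (if p = (j, i) then A i j else if p = (i, j) then -(starRingEnd ℂ) (A j i) else 0)
          from rfl]
      rw [sum_two (pair_ne hij.symm)]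
      simp only [eq_self_iff_true, if_true, if_neg (pair_ne hij.symm),
        if_neg (pair_ne hij), Complex.conj_conj]
      have := habC hA hij
      linear_combination this

lemma diag_entries (hU : Uᴴ * U = 1) (M : Fin n × Fin n → ℂ) (g : Fin n → ℂ)
    (h : ∀ k, ∑ s, M (s, s) * U k s = g k) (t : Fin n) :
    M (t, t) = ∑ k, (starRingEnd ℂ) (U k t) * g k := by
  have hd : ∀ s, (if t = s then (1 : ℂ) else 0)
      = ∑ k, (starRingEnd ℂ) (U k t) * U k s := by
    intro s
    have h1 : (Uᴴ * U) t s = (1 : Matrix (Fin n) (Fin n) ℂ) t s := by rw [hU]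
    simpa [Matrix.mul_apply, Matrix.conjTranspose_apply, Matrix.one_apply] using h1.symm
  calc M (t, t) = ∑ s, M (s, s) * (if t = s then 1 else 0) := by
        simp [mul_ite, Finset.sum_ite_eq]
    _ = ∑ s, ∑ k, (starRingEnd ℂ) (U k t) * (M (s, s) * U k s) := by
        refine Finset.sum_congr rfl fun s _ => ?_
        rw [hd s, Finset.mul_sum]
        exact Finset.sum_congr rfl fun k _ => by ring
    _ = ∑ k, (starRingEnd ℂ) (U k t) * ∑ s, M (s, s) * U k s := by
        rw [Finset.sum_comm]
        exact Finset.sum_congr rfl fun k _ => (Finset.mul_sum _ _ _).symm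
    _ = ∑ k, (starRingEnd ℂ) (U k t) * g k := by simp [h]

end Helpers

/-- If some PPT POVM achieves perfect discrimination of the uniform ensemble over an
orthonormal LDOI basis, then every entry of `U` has magnitude `0` or `1` and
`max{|a_{i,j}|², |a_{j,i}|²} = 1` for all `i ≠ j`; that is, the basis consists entirely of
product states. -/
theorem ppt_perfect_implies_product (n : ℕ) (hn : 2 ≤ n) (U A : Matrix (Fin n) (Fin n) ℂ)
    (hU : Uᴴ * U = 1)
    (hA : ∀ i j : Fin n, i ≠ j → ‖A i j‖ ^ 2 + ‖A j i‖ ^ 2 = 1)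
    (P : Fin n → Fin n → Matrix (Fin n × Fin n) (Fin n × Fin n) ℂ)
    (hPpsd : ∀ i j, (P i j).PosSemidef) (hPsum : ∑ i, ∑ j, P i j = 1)
    (hPppt : ∀ i j, (ptranspose (P i j)).PosSemidef)
    (hperfect : (1 / (n : ℝ) ^ 2) *
        ∑ i, ∑ j, (star (ldoiBasis U A i j) ⬝ᵥ (P i j *ᵥ ldoiBasis U A i j)).re = 1) :
    (∀ k i : Fin n, ‖U k i‖ = 0 ∨ ‖U k i‖ = 1) ∧
    (∀ i j : Fin n, i ≠ j →
      max (‖A i j‖ ^ 2) (‖A j i‖ ^ 2) = 1) := by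
  have hn0 : (n : ℝ) ≠ 0 := Nat.cast_ne_zero.mpr (by omega)
  have hU' : U * Uᴴ = 1 := mul_eq_one_comm.mp hU
  have hnorm : ∀ i j, star (ldoiBasis U A i j) ⬝ᵥ ldoiBasis U A i j = 1 := ldoi_norm hU' hA
  -- the flattened overlap function
  set G : (Fin n × Fin n) → (Fin n × Fin n) → ℝ := fun q r =>
    (star (ldoiBasis U A q.1 q.2) ⬝ᵥ (P r.1 r.2 *ᵥ ldoiBasis U A q.1 q.2)).re with hGdef
  have hGnn : ∀ q r, 0 ≤ G q r := fun q r => by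
    simpa using (hPpsd r.1 r.2).re_dotProduct_nonneg (ldoiBasis U A q.1 q.2)
  have hGtot : ∀ q, ∑ r, G q r = 1 := by
    intro q
    have h1 : ∑ r : Fin n × Fin n, star (ldoiBasis U A q.1 q.2) ⬝ᵥ
          (P r.1 r.2 *ᵥ ldoiBasis U A q.1 q.2)
        = star (ldoiBasis U A q.1 q.2) ⬝ᵥ
          ((∑ r : Fin n × Fin n, P r.1 r.2) *ᵥ ldoiBasis U A q.1 q.2) := by
      rw [sum_mulVec', dot_sum]
    have h2 : (∑ r : Fin n × Fin n, P r.1 r.2) = 1 := by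
      rw [Fintype.sum_prod_type]; exact hPsum
    have h3 := h1.trans (by rw [h2, Matrix.one_mulVec, hnorm])
    calc ∑ r, G q r = (∑ r : Fin n × Fin n, star (ldoiBasis U A q.1 q.2) ⬝ᵥ
          (P r.1 r.2 *ᵥ ldoiBasis U A q.1 q.2)).re := by
          rw [Complex.re_sum]
      _ = 1 := by rw [h3]; simp
  have hGdiag : ∑ q, G q q = (n : ℝ) ^ 2 := by
    have hS : ∑ i, ∑ j, (star (ldoiBasis U A i j) ⬝ᵥ (P i j *ᵥ ldoiBasis U A i j)).re
        = (n : ℝ) ^ 2 := by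
      have h := hperfect
      field_simp at h
      linarith
    rw [Fintype.sum_prod_type]
    exact hS
  have hGzero : ∀ q r : Fin n × Fin n, r ≠ q → G q r = 0 := by
    have hsum0 : ∑ q : Fin n × Fin n, (∑ r ∈ Finset.univ.erase q, G q r) = 0 := by
      have he : ∀ q : Fin n × Fin n, ∑ r ∈ Finset.univ.erase q, G q r
          = (∑ r, G q r) - G q q := by
        intro q
        rw [Finset.sum_erase_eq_sub (Finset.mem_univ q)]
      rw [Finset.sum_congr rfl fun q _ => he q, Finset.sum_sub_distrib, hGdiag]
      simp only [hGtot]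
      simp [Finset.card_univ, pow_two]
    intro q r hr
    have h1 := (Finset.sum_eq_zero_iff_of_nonneg
      (fun q _ => Finset.sum_nonneg fun r _ => hGnn q r)).mp hsum0 q (Finset.mem_univ q)
    exact (Finset.sum_eq_zero_iff_of_nonneg (fun r _ => hGnn q r)).mp h1 r
      (Finset.mem_erase.mpr ⟨hr, Finset.mem_univ r⟩)
  have hzero : ∀ i j k l : Fin n, ((k, l) : Fin n × Fin n) ≠ (i, j) →
      P k l *ᵥ ldoiBasis U A i j = 0 := by
    intro i j k l hne
    exact psd_dot_zero (hPpsd k l) (hGzero (i, j) (k, l) hne)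
  have hfix : ∀ i j, P i j *ᵥ ldoiBasis U A i j = ldoiBasis U A i j := by
    intro i j
    have h1 : ∑ r : Fin n × Fin n, (P r.1 r.2 *ᵥ ldoiBasis U A i j) = ldoiBasis U A i j := by
      rw [← sum_mulVec']
      rw [show (∑ r : Fin n × Fin n, P r.1 r.2) = 1 from by
        rw [Fintype.sum_prod_type]; exact hPsum]
      rw [Matrix.one_mulVec]
    rw [Finset.sum_eq_single ((i, j) : Fin n × Fin n)] at h1
    · exact h1
    · intro r _ hr
      exact hzero i j r.1 r.2 (by simpa using hr)
    · intro h; exact absurd (Finset.mem_univ _) h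
  -- Part A: for i < j, A i j * A j i = 0
  have partA : ∀ i j : Fin n, i < j → A i j * A j i = 0 := by
    intro i j hij
    have hne : i ≠ j := hij.ne
    -- columns at diagonal positions vanish
    have hdiagrow : ∀ q : Fin n × Fin n, ∀ t : Fin n, P i j q (t, t) = 0 := by
      intro q t
      have h : ∀ k, ∑ s, P i j q (s, s) * U k s = (0 : ℂ) := by
        intro k
        have h0 := congrFun (hzero k k i j (pair_ne_diag hne)) q
        rw [ldoi_diag, mulVec_diag] at h0
        exact h0
      have h2 := diag_entries hU (fun p => P i j q p) (fun _ => 0) h t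
      simpa using h2
    have Eψ : P i j (j, i) (i, j) * A j i
        + P i j (j, i) (j, i) * (-(starRingEnd ℂ) (A i j)) = 0 := by
      have h0 := congrFun (hzero j i i j (pair_ne hne)) (j, i)
      rw [ldoi_gt hij, mulVec_two (pair_ne hne)] at h0
      exact h0
    have Eφ : P i j (j, i) (i, j) * A i j
        + P i j (j, i) (j, i) * (starRingEnd ℂ) (A j i) = (starRingEnd ℂ) (A j i) := by
      have h0 := congrFun (hfix i j) (j, i)
      rw [ldoi_lt hij] at h0
      rw [mulVec_two (pair_ne hne)] at h0
      rw [h0]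
      simp [hne, Ne.symm hne]
    have H := habC hA hne
    have hcval : P i j (j, i) (i, j) = (starRingEnd ℂ) (A i j) * (starRingEnd ℂ) (A j i) := by
      linear_combination (starRingEnd ℂ) (A i j) * Eφ + (starRingEnd ℂ) (A j i) * Eψ
        - P i j (j, i) (i, j) * H
    have hQd : ptranspose (P i j) (i, i) (i, i) = 0 := hdiagrow (i, i) i
    have h0 : ptranspose (P i j) (i, i) (j, j) = 0 := psd_entry_zero (hPppt i j) hQd (j, j)
    have hc0 : P i j (j, i) (i, j) = 0 := h0
    rw [hcval] at hc0
    have : (starRingEnd ℂ) (A i j * A j i) = 0 := by rw [_root_.map_mul]; exact hc0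
    calc A i j * A j i = (starRingEnd ℂ) ((starRingEnd ℂ) (A i j * A j i)) := by
          rw [Complex.conj_conj]
      _ = 0 := by rw [this, map_zero]
  -- Part B: cross products of entries in each row of U vanish
  have partB : ∀ i k l : Fin n, k ≠ l → (starRingEnd ℂ) (U i k) * U i l = 0 := by
    intro i k l hkl
    have hoff : ∀ s t : Fin n, s ≠ t → ∀ q : Fin n × Fin n, P i i q (s, t) = 0 := by
      suffices hlt : ∀ s t : Fin n, s < t → ∀ q : Fin n × Fin n,
          P i i q (s, t) = 0 ∧ P i i q (t, s) = 0 by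
        intro s t hst q
        rcases lt_or_gt_of_ne hst with h | h
        · exact (hlt s t h q).1
        · exact (hlt t s h q).2
      intro s t hst q
      have hne : s ≠ t := hst.ne
      have E1 : P i i q (s, t) * A s t
          + P i i q (t, s) * (starRingEnd ℂ) (A t s) = 0 := by
        have h0 := congrFun (hzero s t i i (Ne.symm (pair_ne_diag hne))) q
        rw [ldoi_lt hst, mulVec_two (pair_ne hne)] at h0
        exact h0
      have E2 : P i i q (s, t) * A t s
          + P i i q (t, s) * (-(starRingEnd ℂ) (A s t)) = 0 := by
        have h0 := congrFun (hzero t s i i (Ne.symm (pair_ne_diag hne.symm))) q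
        rw [ldoi_gt hst, mulVec_two (pair_ne hne)] at h0
        exact h0
      have H := habC hA hne
      constructor
      · linear_combination (starRingEnd ℂ) (A s t) * E1 + (starRingEnd ℂ) (A t s) * E2
          - P i i q (s, t) * H
      · linear_combination (A t s) * E1 - (A s t) * E2 - P i i q (t, s) * H
    have hdiagval : ∀ t l' : Fin n,
        P i i (l', l') (t, t) = (starRingEnd ℂ) (U i t) * U i l' := by
      intro t l'
      have h : ∀ m, ∑ s, P i i (l', l') (s, s) * U m s
          = (if m = i then U i l' else 0) := by
        intro m
        rcases eq_or_ne m i with rfl | hmi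
        · have h0 := congrFun (hfix m m) (l', l')
          rw [ldoi_diag, mulVec_diag] at h0
          simpa using h0
        · have h0 := congrFun (hzero m m i i
            (diag_pair_ne (Ne.symm hmi))) (l', l')
          rw [ldoi_diag, mulVec_diag] at h0
          simpa [hmi] using h0
      have h2 := diag_entries hU (fun p => P i i (l', l') p) _ h t
      simpa [mul_ite, mul_zero] using h2
    have hQd : ptranspose (P i i) (k, l) (k, l) = 0 := hoff k l hkl (k, l)
    have h0 : ptranspose (P i i) (k, l) (l, k) = 0 := psd_entry_zero (hPppt i i) hQd (l, k)
    have h1 : P i i (l, l) (k, k) = 0 := h0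
    rw [hdiagval] at h1
    exact h1
  -- conclude
  constructor
  · intro k i
    rcases eq_or_ne (U k i) 0 with h | h
    · left; simp [h]
    · right
      have hrow : ∀ l, l ≠ i → U k l = 0 := by
        intro l hl
        have h2 := partB k i l (Ne.symm hl)
        rcases mul_eq_zero.mp h2 with h3 | h3
        · exact absurd (by simpa using congrArg (starRingEnd ℂ) h3) h
        · exact h3
      have hdrow : (U * Uᴴ) k k = 1 := by rw [hU']; simp
      rw [Matrix.mul_apply] at hdrow
      rw [Finset.sum_eq_single i] at hdrow
      · have : (Complex.normSq (U k i) : ℂ) = 1 := by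
          rw [← Complex.mul_conj]
          simpa [Matrix.conjTranspose_apply] using hdrow
        have hns : Complex.normSq (U k i) = 1 := by exact_mod_cast this
        rw [Complex.norm_def, hns, Real.sqrt_one]
      · intro l _ hl
        simp [hrow l hl]
      · intro h'; exact absurd (Finset.mem_univ _) h'
  · intro i j hij
    have key : ∀ i j : Fin n, i < j →
        max (‖A i j‖ ^ 2) (‖A j i‖ ^ 2) = 1 := by
      intro i j hij
      have h0 := partA i j hij
      have hsum := hA i j hij.ne
      rcases mul_eq_zero.mp h0 with h1 | h1
      · rw [h1] at hsum ⊢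
        simp only [norm_zero] at hsum ⊢
        rw [zero_pow (two_ne_zero)] at hsum ⊢
        rw [zero_add] at hsum
        rw [hsum]
        simp
      · rw [h1] at hsum ⊢
        simp only [norm_zero] at hsum ⊢
        rw [zero_pow (two_ne_zero)] at hsum ⊢
        rw [add_zero] at hsum
        rw [hsum]
        simp
    rcases lt_or_gt_of_ne hij with h | h
    · exact key i j h
    · rw [max_comm]
      exact key j i h
end

section
/- Let n = 2 and let α, β, γ, δ ∈ ℂ satisfy |α|² + |β|² = 1 and |γ|² + |δ|² = 1. Define φ₁ = α·e₁⊗e₁ + conj(β)·e₂⊗e₂, φ₂ = β·e₁⊗e₁ − conj(α)·e₂⊗e₂, φ₃ = γ·e₁⊗e₂ + conj(δ)·e₂⊗e₁, φ₄ = δ·e₁⊗e₂ − conj(γ)·e₂⊗e₁, and set V = (1/2)·(max{|α|², |β|²} + max{|γ|², |δ|²}). Then: (1) every PPT POVM (P_1, P_2, P_3, P_4) satisfies (1/4) ∑_{k=1}^4 ⟨φ_k, P_k φ_k⟩ ≤ V; and (2) there exists a POVM whose elements are Kronecker products of positive semidefinite 2×2 matrices with (1/4) ∑_{k=1}^4 ⟨φ_k,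 P_k φ_k⟩ = V. -/
open Matrix Kronecker BigOperators
open scoped ComplexOrder

/-- The two-qubit orthonormal LDOI basis
`φ₁ = α e₁⊗e₁ + conj(β) e₂⊗e₂`, `φ₂ = β e₁⊗e₁ − conj(α) e₂⊗e₂`,
`φ₃ = γ e₁⊗e₂ + conj(δ) e₂⊗e₁`, `φ₄ = δ e₁⊗e₂ − conj(γ) e₂⊗e₁`. -/
noncomputable def twoQubitBasis (α β γ δ : ℂ) : Fin 4 → (Fin 2 × Fin 2) → ℂ :=
  ![fun p => if p = (0, 0) then α else if p = (1, 1) then (starRingEnd ℂ) β else 0,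
    fun p => if p = (0, 0) then β else if p = (1, 1) then -(starRingEnd ℂ) α else 0,
    fun p => if p = (0, 1) then γ else if p = (1, 0) then (starRingEnd ℂ) δ else 0,
    fun p => if p = (0, 1) then δ else if p = (1, 0) then -(starRingEnd ℂ) γ else 0]

lemma twoPoint_form {ι : Type*} [Fintype ι] [DecidableEq ι] (N : Matrix ι ι ℂ)
    (p q : ι) (hpq : p ≠ q) (z₁ z₂ : ℂ) :
    star (fun r => if r = p then z₁ else if r = q then z₂ else 0) ⬝ᵥ
      (N *ᵥ fun r => if r = p then z₁ else if r = q then z₂ else 0) =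
    (starRingEnd ℂ) z₁ * z₁ * N p p + (starRingEnd ℂ) z₁ * z₂ * N p q +
      (starRingEnd ℂ) z₂ * z₁ * N q p + (starRingEnd ℂ) z₂ * z₂ * N q q := by
  have hv : (fun r => if r = p then z₁ else if r = q then z₂ else 0) =
      Pi.single p z₁ + Pi.single q z₂ := by
    funext r
    by_cases h1 : r = p <;> by_cases h2 : r = q <;>
      simp [h1, h2, Pi.single_apply, hpq] <;> simp_all
  rw [hv]
  have hsd : ∀ (z : ℂ) (i : ι) (f : ι → ℂ), star (Pi.single i z) ⬝ᵥ f = (starRingEnd ℂ) z * f i := by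
    intro z i f
    simp [dotProduct, Pi.single_apply, apply_ite, Finset.sum_ite_eq']
  simp only [star_add, add_dotProduct, mulVec_add, dotProduct_add, mulVec_single, hsd]
  simp only [Pi.smul_apply, op_smul_eq_mul, Matrix.col_apply]
  ring

lemma diag_re_nonneg_s14 {ι : Type*} [Fintype ι] [DecidableEq ι] {N : Matrix ι ι ℂ}
    (hN : N.PosSemidef) (p : ι) : 0 ≤ (N p p).re := by
  have h := (Complex.le_def.mp (hN.dotProduct_mulVec_nonneg (Pi.single p 1))).1
  have hsd : ∀ (z : ℂ) (i : ι) (f : ι → ℂ), star (Pi.single i z) ⬝ᵥ f = (starRingEnd ℂ) z * f i := by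
    intro z i f
    simp [dotProduct, Pi.single_apply, apply_ite, Finset.sum_ite_eq']
  simpa [hsd, mulVec_single] using h

lemma cross_bound {ι : Type*} [Fintype ι] [DecidableEq ι] {N : Matrix ι ι ℂ}
    (hN : N.PosSemidef) (p q : ι) (hpq : p ≠ q) (w : ℂ) :
    2 * (w * N p q).re ≤ ‖w‖ * ((N p p).re + (N q q).re) := by
  rcases eq_or_ne w 0 with rfl | hw
  · simp
  set t := ‖w‖ with ht
  have ht0 : 0 < t := norm_pos_iff.mpr hw
  have key := twoPoint_form N p q hpq ((starRingEnd ℂ) w) (-(t : ℂ))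
  have h0 := (Complex.le_def.mp
    (hN.dotProduct_mulVec_nonneg (fun r => if r = p then (starRingEnd ℂ) w else if r = q then -(t : ℂ) else 0))).1
  rw [key] at h0
  rw [← hN.1.apply q p] at h0
  have ht2 : t ^ 2 = w.re ^ 2 + w.im ^ 2 := by
    rw [ht, Complex.sq_norm, Complex.normSq_apply]; ring
  simp only [Complex.star_def, Complex.add_re, Complex.mul_re, Complex.mul_im, Complex.conj_re,
    Complex.conj_im, Complex.neg_re, Complex.neg_im, Complex.ofReal_re, Complex.ofReal_im,
    Complex.zero_re] at h0 ⊢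
  ring_nf at h0 ⊢
  rw [show (N p p).re * t + t * (N q q).re = t * ((N p p).re + (N q q).re) by ring,
    show w.re * (N p q).re * 2 - w.im * (N p q).im * 2 =
      2 * (w.re * (N p q).re - w.im * (N p q).im) by ring, ← mul_le_mul_iff_of_pos_left ht0]
  have ht2' : t ^ 2 * (N p p).re = (w.re ^ 2 + w.im ^ 2) * (N p p).re := by rw [ht2]
  nlinarith [h0, ht2']

lemma entry_bound (P : Matrix (Fin 2 × Fin 2) (Fin 2 × Fin 2) ℂ)
    (hP : P.PosSemidef) (hT : (ptranspose P).PosSemidef)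
    (i j k l : Fin 2) (hik : i ≠ k) (z₁ z₂ : ℂ) (m : ℝ)
    (hm1 : ‖z₁‖ ^ 2 ≤ m) (hm2 : ‖z₂‖ ^ 2 ≤ m) :
    (star (fun p => if p = (i,j) then z₁ else if p = (k,l) then z₂ else 0) ⬝ᵥ
      (P *ᵥ fun p => if p = (i,j) then z₁ else if p = (k,l) then z₂ else 0)).re ≤
    m * ((P (i,j) (i,j)).re + (P (k,l) (k,l)).re) +
      ‖z₁‖ * ‖z₂‖ * ((P (k,j) (k,j)).re + (P (i,l) (i,l)).re) := by
  have hpq : ((i,j) : Fin 2 × Fin 2) ≠ (k,l) := by simp [Prod.ext_iff]; intro h; exact absurd h hik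
  rw [twoPoint_form P _ _ hpq]
  have hherm := hP.1.apply (k,l) (i,j)
  have hcross := cross_bound hT ((k,j)) ((i,l))
    (by simp [Prod.ext_iff]; intro h; exact absurd h.symm hik) ((starRingEnd ℂ) z₁ * z₂)
  have hTentry : ptranspose P (k,j) (i,l) = P (i,j) (k,l) := rfl
  have hTd1 : ptranspose P (k,j) (k,j) = P (k,j) (k,j) := rfl
  have hTd2 : ptranspose P (i,l) (i,l) = P (i,l) (i,l) := rfl
  rw [hTentry, hTd1, hTd2,
    show ‖(starRingEnd ℂ) z₁ * z₂‖ = ‖z₁‖ * ‖z₂‖ by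
      rw [norm_mul, Complex.norm_conj]] at hcross
  have d1 := diag_re_nonneg_s14 hP ((i,j) : Fin 2 × Fin 2)
  have d2 := diag_re_nonneg_s14 hP ((k,l) : Fin 2 × Fin 2)
  have ha1 : ‖z₁‖ ^ 2 = z₁.re ^ 2 + z₁.im ^ 2 := by
    rw [Complex.sq_norm, Complex.normSq_apply]; ring
  have ha2 : ‖z₂‖ ^ 2 = z₂.re ^ 2 + z₂.im ^ 2 := by
    rw [Complex.sq_norm, Complex.normSq_apply]; ring
  rw [← hherm]
  simp only [Complex.star_def, Complex.add_re, Complex.mul_re, Complex.mul_im,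
    Complex.conj_re, Complex.conj_im] at hcross ⊢
  nlinarith [hcross, mul_nonneg (sub_nonneg.2 hm1) d1, mul_nonneg (sub_nonneg.2 hm2) d2,
    ha1, ha2, d1, d2]

/-- rank-one diagonal projector -/
def pr (i : Fin 2) : Matrix (Fin 2) (Fin 2) ℂ := Matrix.diagonal (fun j => if j = i then 1 else 0)

lemma pr_psd (i : Fin 2) : (pr i).PosSemidef := by
  refine Matrix.PosSemidef.diagonal fun j => ?_
  dsimp only
  split <;> simp

lemma pr_sum_one : pr 0 ⊗ₖ pr 0 + pr 1 ⊗ₖ pr 1 + pr 0 ⊗ₖ pr 1 + pr 1 ⊗ₖ pr 0 = 1 := by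
  ext ⟨p1, p2⟩ ⟨q1, q2⟩
  fin_cases p1 <;> fin_cases p2 <;> fin_cases q1 <;> fin_cases q2 <;>
    simp [pr, Matrix.one_apply, Matrix.diagonal_apply, Prod.ext_iff]

lemma kron_pr_val (z₁ z₂ : ℂ) (i j k l i' j' : Fin 2) (hik : i ≠ k) (hjl : j ≠ l) :
    (star (fun p => if p = (i,j) then z₁ else if p = (k,l) then z₂ else 0) ⬝ᵥ
      ((pr i' ⊗ₖ pr j') *ᵥ fun p => if p = (i,j) then z₁ else if p = (k,l) then z₂ else 0)).re =
    (if i = i' ∧ j = j' then ‖z₁‖ ^ 2 else 0) +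
      (if k = i' ∧ l = j' then ‖z₂‖ ^ 2 else 0) := by
  have hpq : ((i,j) : Fin 2 × Fin 2) ≠ (k,l) := by simp [Prod.ext_iff]; intro h; exact absurd h hik
  rw [twoPoint_form _ _ _ hpq]
  simp only [Matrix.kroneckerMap_apply, pr, Matrix.diagonal_apply, if_neg hik, if_neg hik.symm,
    if_neg hjl, if_neg hjl.symm]
  split_ifs <;>
    first
    | (exfalso; simp_all; done)
    | (simp [Complex.sq_norm, Complex.normSq_apply, Complex.add_re, Complex.mul_re,
        Complex.mul_im]; try ring_nf)

/-- For every two-qubit orthonormal LDOI basis, the value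
`V = (1/2)(max{|α|², |β|²} + max{|γ|², |δ|²})` is an upper bound on the success probability
of every PPT POVM for the uniform ensemble, and is exactly attained by a POVM whose elements
are Kronecker products of positive semidefinite `2 × 2` matrices. -/
theorem two_qubit_ldoi_dist (α β γ δ : ℂ)
    (hαβ : ‖α‖ ^ 2 + ‖β‖ ^ 2 = 1)
    (hγδ : ‖γ‖ ^ 2 + ‖δ‖ ^ 2 = 1)
    (V : ℝ)
    (hV : V = (1 / 2) * (max (‖α‖ ^ 2) (‖β‖ ^ 2) +
      max (‖γ‖ ^ 2) (‖δ‖ ^ 2))) :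
    (∀ P : Fin 4 → Matrix (Fin 2 × Fin 2) (Fin 2 × Fin 2) ℂ,
      (∀ k, (P k).PosSemidef) → (∑ k, P k = 1) →
      (∀ k, (ptranspose (P k)).PosSemidef) →
      (1 / 4 : ℝ) *
          ∑ k, (star (twoQubitBasis α β γ δ k) ⬝ᵥ (P k *ᵥ twoQubitBasis α β γ δ k)).re ≤ V) ∧
    (∃ P : Fin 4 → Matrix (Fin 2 × Fin 2) (Fin 2 × Fin 2) ℂ,
      (∀ k, ∃ Q R : Matrix (Fin 2) (Fin 2) ℂ,
        Q.PosSemidef ∧ R.PosSemidef ∧ P k = Q ⊗ₖ R) ∧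
      (∑ k, P k = 1) ∧
      (1 / 4 : ℝ) *
          ∑ k, (star (twoQubitBasis α β γ δ k) ⬝ᵥ (P k *ᵥ twoQubitBasis α β γ δ k)).re = V) := by
  set a := ‖α‖ ^ 2 with ha
  set b := ‖β‖ ^ 2 with hb
  set c := ‖γ‖ ^ 2 with hc
  set d := ‖δ‖ ^ 2 with hd
  have ha0 : 0 ≤ a := sq_nonneg _
  have hb0 : 0 ≤ b := sq_nonneg _
  have hc0 : 0 ≤ c := sq_nonneg _
  have hd0 : 0 ≤ d := sq_nonneg _
  have habm : ‖α‖ * ‖β‖ ≤ 1 / 2 := by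
    nlinarith [sq_nonneg (‖α‖ - ‖β‖)]
  have hgdm : ‖γ‖ * ‖δ‖ ≤ 1 / 2 := by
    nlinarith [sq_nonneg (‖γ‖ - ‖δ‖)]
  have hm2 : 1 ≤ 2 * max a b := by
    have := le_max_left a b; have := le_max_right a b; linarith
  have hM2 : 1 ≤ 2 * max c d := by
    have := le_max_left c d; have := le_max_right c d; linarith
  constructor
  · intro P hP hsum hT
    -- diagonal sum constraints
    have hcol : ∀ p : Fin 2 × Fin 2,
        (P 0 p p).re + (P 1 p p).re + (P 2 p p).re + (P 3 p p).re = 1 := by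
      intro p
      rw [Fin.sum_univ_four] at hsum
      have h := congrFun (congrFun (congrArg (fun M => M.map Complex.re) hsum) p) p
      simpa [Matrix.add_apply, Matrix.one_apply_eq, Matrix.map_apply] using h
    have h0 := entry_bound (P 0) (hP 0) (hT 0) 0 0 1 1 (by decide) α ((starRingEnd ℂ) β)
      (max a b) (le_max_left a b) (by rw [Complex.norm_conj]; exact le_max_right a b)
    have h1 := entry_bound (P 1) (hP 1) (hT 1) 0 0 1 1 (by decide) β (-(starRingEnd ℂ) α)
      (max a b) (le_max_right a b)
      (by rw [norm_neg, Complex.norm_conj]; exact le_max_left a b)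
    have h2 := entry_bound (P 2) (hP 2) (hT 2) 0 1 1 0 (by decide) γ ((starRingEnd ℂ) δ)
      (max c d) (le_max_left c d) (by rw [Complex.norm_conj]; exact le_max_right c d)
    have h3 := entry_bound (P 3) (hP 3) (hT 3) 0 1 1 0 (by decide) δ (-(starRingEnd ℂ) γ)
      (max c d) (le_max_right c d)
      (by rw [norm_neg, Complex.norm_conj]; exact le_max_left c d)
    have e0 : twoQubitBasis α β γ δ 0 =
        fun p => if p = (0,0) then α else if p = (1,1) then (starRingEnd ℂ) β else 0 := rfl
    have e1 : twoQubitBasis α β γ δ 1 =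
        fun p => if p = (0,0) then β else if p = (1,1) then -(starRingEnd ℂ) α else 0 := rfl
    have e2 : twoQubitBasis α β γ δ 2 =
        fun p => if p = (0,1) then γ else if p = (1,0) then (starRingEnd ℂ) δ else 0 := rfl
    have e3 : twoQubitBasis α β γ δ 3 =
        fun p => if p = (0,1) then δ else if p = (1,0) then -(starRingEnd ℂ) γ else 0 := rfl
    rw [Fin.sum_univ_four, e0, e1, e2, e3, hV]
    rw [show ‖-(starRingEnd ℂ) α‖ = ‖α‖ by
      rw [norm_neg, Complex.norm_conj]] at h1
    rw [show ‖-(starRingEnd ℂ) γ‖ = ‖γ‖ by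
      rw [norm_neg, Complex.norm_conj]] at h3
    rw [Complex.norm_conj] at h0 h2
    -- abbreviations
    set m := max a b
    set M := max c d
    -- column sums
    have hX : ((P 0 ((0:Fin 2),(0:Fin 2)) ((0:Fin 2),(0:Fin 2))).re
        + (P 0 ((1:Fin 2),(1:Fin 2)) ((1:Fin 2),(1:Fin 2))).re
        + (P 1 ((0:Fin 2),(0:Fin 2)) ((0:Fin 2),(0:Fin 2))).re
        + (P 1 ((1:Fin 2),(1:Fin 2)) ((1:Fin 2),(1:Fin 2))).re)
        + ((P 2 ((0:Fin 2),(0:Fin 2)) ((0:Fin 2),(0:Fin 2))).re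
        + (P 2 ((1:Fin 2),(1:Fin 2)) ((1:Fin 2),(1:Fin 2))).re
        + (P 3 ((0:Fin 2),(0:Fin 2)) ((0:Fin 2),(0:Fin 2))).re
        + (P 3 ((1:Fin 2),(1:Fin 2)) ((1:Fin 2),(1:Fin 2))).re) = 2 := by
      have := hcol (0,0); have := hcol (1,1); linarith
    have hY : ((P 2 ((0:Fin 2),(1:Fin 2)) ((0:Fin 2),(1:Fin 2))).re
        + (P 2 ((1:Fin 2),(0:Fin 2)) ((1:Fin 2),(0:Fin 2))).re
        + (P 3 ((0:Fin 2),(1:Fin 2)) ((0:Fin 2),(1:Fin 2))).re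
        + (P 3 ((1:Fin 2),(0:Fin 2)) ((1:Fin 2),(0:Fin 2))).re)
        + ((P 0 ((0:Fin 2),(1:Fin 2)) ((0:Fin 2),(1:Fin 2))).re
        + (P 0 ((1:Fin 2),(0:Fin 2)) ((1:Fin 2),(0:Fin 2))).re
        + (P 1 ((0:Fin 2),(1:Fin 2)) ((0:Fin 2),(1:Fin 2))).re
        + (P 1 ((1:Fin 2),(0:Fin 2)) ((1:Fin 2),(0:Fin 2))).re) = 2 := by
      have := hcol (0,1); have := hcol (1,0); linarith
    have hfm : ‖γ‖ * ‖δ‖ ≤ m := by linarith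
    have heM : ‖α‖ * ‖β‖ ≤ M := by linarith
    -- nonnegativity of diagonal entries
    have hD : ∀ (k : Fin 4) (p : Fin 2 × Fin 2), 0 ≤ (P k p p).re :=
      fun k p => diag_re_nonneg_s14 (hP k) p
    -- products
    have hprod1 : ‖γ‖ * ‖δ‖ * ((P 2 ((0:Fin 2),(0:Fin 2)) ((0:Fin 2),(0:Fin 2))).re
        + (P 2 ((1:Fin 2),(1:Fin 2)) ((1:Fin 2),(1:Fin 2))).re
        + (P 3 ((0:Fin 2),(0:Fin 2)) ((0:Fin 2),(0:Fin 2))).re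
        + (P 3 ((1:Fin 2),(1:Fin 2)) ((1:Fin 2),(1:Fin 2))).re) ≤
        m * ((P 2 ((0:Fin 2),(0:Fin 2)) ((0:Fin 2),(0:Fin 2))).re
        + (P 2 ((1:Fin 2),(1:Fin 2)) ((1:Fin 2),(1:Fin 2))).re
        + (P 3 ((0:Fin 2),(0:Fin 2)) ((0:Fin 2),(0:Fin 2))).re
        + (P 3 ((1:Fin 2),(1:Fin 2)) ((1:Fin 2),(1:Fin 2))).re) := by
      apply mul_le_mul_of_nonneg_right hfm
      have := hD 2 (0,0); have := hD 2 (1,1); have := hD 3 (0,0); have := hD 3 (1,1); linarith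
    have hprod2 : ‖α‖ * ‖β‖ * ((P 0 ((0:Fin 2),(1:Fin 2)) ((0:Fin 2),(1:Fin 2))).re
        + (P 0 ((1:Fin 2),(0:Fin 2)) ((1:Fin 2),(0:Fin 2))).re
        + (P 1 ((0:Fin 2),(1:Fin 2)) ((0:Fin 2),(1:Fin 2))).re
        + (P 1 ((1:Fin 2),(0:Fin 2)) ((1:Fin 2),(0:Fin 2))).re) ≤
        M * ((P 0 ((0:Fin 2),(1:Fin 2)) ((0:Fin 2),(1:Fin 2))).re
        + (P 0 ((1:Fin 2),(0:Fin 2)) ((1:Fin 2),(0:Fin 2))).re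
        + (P 1 ((0:Fin 2),(1:Fin 2)) ((0:Fin 2),(1:Fin 2))).re
        + (P 1 ((1:Fin 2),(0:Fin 2)) ((1:Fin 2),(0:Fin 2))).re) := by
      apply mul_le_mul_of_nonneg_right heM
      have := hD 0 (0,1); have := hD 0 (1,0); have := hD 1 (0,1); have := hD 1 (1,0); linarith
    have hmX := congrArg (fun x => m * x) hX
    have hMY := congrArg (fun x => M * x) hY
    simp only [mul_add] at hmX hMY
    linarith [h0, h1, h2, h3, hprod1, hprod2, hmX, hMY]
  · -- construction
    rcases le_total b a with hab | hab <;> rcases le_total d c with hcd | hcd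
    · refine ⟨![pr 0 ⊗ₖ pr 0, pr 1 ⊗ₖ pr 1, pr 0 ⊗ₖ pr 1, pr 1 ⊗ₖ pr 0], ?_, ?_, ?_⟩
      · intro k; fin_cases k <;> exact ⟨pr _, pr _, pr_psd _, pr_psd _, rfl⟩
      · rw [Fin.sum_univ_four]
        show pr 0 ⊗ₖ pr 0 + pr 1 ⊗ₖ pr 1 + pr 0 ⊗ₖ pr 1 + pr 1 ⊗ₖ pr 0 = 1
        rw [← pr_sum_one]
        try abel
      · rw [Fin.sum_univ_four]
        simp only [Matrix.cons_val_zero, Matrix.cons_val_one, Matrix.head_cons,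
          Matrix.cons_val_two, Matrix.tail_cons, Matrix.cons_val_three]
        rw [hV, max_eq_left hab, max_eq_left hcd]
        rw [show (star (twoQubitBasis α β γ δ 0) ⬝ᵥ
          ((pr 0 ⊗ₖ pr 0) *ᵥ twoQubitBasis α β γ δ 0)).re =
          (if (0:Fin 2) = 0 ∧ (0:Fin 2) = 0 then ‖α‖ ^ 2 else 0) +
          (if (1:Fin 2) = 0 ∧ (1:Fin 2) = 0 then ‖(starRingEnd ℂ) β‖ ^ 2 else 0) from
          kron_pr_val α ((starRingEnd ℂ) β) 0 0 1 1 0 0 (by decide) (by decide)]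
        rw [show (star (twoQubitBasis α β γ δ 1) ⬝ᵥ
          ((pr 1 ⊗ₖ pr 1) *ᵥ twoQubitBasis α β γ δ 1)).re =
          (if (0:Fin 2) = 1 ∧ (0:Fin 2) = 1 then ‖β‖ ^ 2 else 0) +
          (if (1:Fin 2) = 1 ∧ (1:Fin 2) = 1 then ‖-(starRingEnd ℂ) α‖ ^ 2 else 0) from
          kron_pr_val β (-(starRingEnd ℂ) α) 0 0 1 1 1 1 (by decide) (by decide)]
        rw [show (star (twoQubitBasis α β γ δ 2) ⬝ᵥ
          ((pr 0 ⊗ₖ pr 1) *ᵥ twoQubitBasis α β γ δ 2)).re =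
          (if (0:Fin 2) = 0 ∧ (1:Fin 2) = 1 then ‖γ‖ ^ 2 else 0) +
          (if (1:Fin 2) = 0 ∧ (0:Fin 2) = 1 then ‖(starRingEnd ℂ) δ‖ ^ 2 else 0) from
          kron_pr_val γ ((starRingEnd ℂ) δ) 0 1 1 0 0 1 (by decide) (by decide)]
        rw [show (star (twoQubitBasis α β γ δ 3) ⬝ᵥ
          ((pr 1 ⊗ₖ pr 0) *ᵥ twoQubitBasis α β γ δ 3)).re =
          (if (0:Fin 2) = 1 ∧ (1:Fin 2) = 0 then ‖δ‖ ^ 2 else 0) +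
          (if (1:Fin 2) = 1 ∧ (0:Fin 2) = 0 then ‖-(starRingEnd ℂ) γ‖ ^ 2 else 0) from
          kron_pr_val δ (-(starRingEnd ℂ) γ) 0 1 1 0 1 0 (by decide) (by decide)]
        simp only [ha, hb, hc, hd]
        norm_num [show ((1:Fin 2) = 0) = False from by simp, show ((0:Fin 2) = 1) = False from by simp,
          Complex.norm_conj, norm_neg]
        ring
    · refine ⟨![pr 0 ⊗ₖ pr 0, pr 1 ⊗ₖ pr 1, pr 1 ⊗ₖ pr 0, pr 0 ⊗ₖ pr 1], ?_, ?_, ?_⟩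
      · intro k; fin_cases k <;> exact ⟨pr _, pr _, pr_psd _, pr_psd _, rfl⟩
      · rw [Fin.sum_univ_four]
        show pr 0 ⊗ₖ pr 0 + pr 1 ⊗ₖ pr 1 + pr 1 ⊗ₖ pr 0 + pr 0 ⊗ₖ pr 1 = 1
        rw [← pr_sum_one]
        try abel
      · rw [Fin.sum_univ_four]
        simp only [Matrix.cons_val_zero, Matrix.cons_val_one, Matrix.head_cons,
          Matrix.cons_val_two, Matrix.tail_cons, Matrix.cons_val_three]
        rw [hV, max_eq_left hab, max_eq_right hcd]
        rw [show (star (twoQubitBasis α β γ δ 0) ⬝ᵥ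
          ((pr 0 ⊗ₖ pr 0) *ᵥ twoQubitBasis α β γ δ 0)).re =
          (if (0:Fin 2) = 0 ∧ (0:Fin 2) = 0 then ‖α‖ ^ 2 else 0) +
          (if (1:Fin 2) = 0 ∧ (1:Fin 2) = 0 then ‖(starRingEnd ℂ) β‖ ^ 2 else 0) from
          kron_pr_val α ((starRingEnd ℂ) β) 0 0 1 1 0 0 (by decide) (by decide)]
        rw [show (star (twoQubitBasis α β γ δ 1) ⬝ᵥ
          ((pr 1 ⊗ₖ pr 1) *ᵥ twoQubitBasis α β γ δ 1)).re =
          (if (0:Fin 2) = 1 ∧ (0:Fin 2) = 1 then ‖β‖ ^ 2 else 0) +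
          (if (1:Fin 2) = 1 ∧ (1:Fin 2) = 1 then ‖-(starRingEnd ℂ) α‖ ^ 2 else 0) from
          kron_pr_val β (-(starRingEnd ℂ) α) 0 0 1 1 1 1 (by decide) (by decide)]
        rw [show (star (twoQubitBasis α β γ δ 2) ⬝ᵥ
          ((pr 1 ⊗ₖ pr 0) *ᵥ twoQubitBasis α β γ δ 2)).re =
          (if (0:Fin 2) = 1 ∧ (1:Fin 2) = 0 then ‖γ‖ ^ 2 else 0) +
          (if (1:Fin 2) = 1 ∧ (0:Fin 2) = 0 then ‖(starRingEnd ℂ) δ‖ ^ 2 else 0) from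
          kron_pr_val γ ((starRingEnd ℂ) δ) 0 1 1 0 1 0 (by decide) (by decide)]
        rw [show (star (twoQubitBasis α β γ δ 3) ⬝ᵥ
          ((pr 0 ⊗ₖ pr 1) *ᵥ twoQubitBasis α β γ δ 3)).re =
          (if (0:Fin 2) = 0 ∧ (1:Fin 2) = 1 then ‖δ‖ ^ 2 else 0) +
          (if (1:Fin 2) = 0 ∧ (0:Fin 2) = 1 then ‖-(starRingEnd ℂ) γ‖ ^ 2 else 0) from
          kron_pr_val δ (-(starRingEnd ℂ) γ) 0 1 1 0 0 1 (by decide) (by decide)]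
        simp only [ha, hb, hc, hd]
        norm_num [show ((1:Fin 2) = 0) = False from by simp, show ((0:Fin 2) = 1) = False from by simp,
          Complex.norm_conj, norm_neg]
        ring
    · refine ⟨![pr 1 ⊗ₖ pr 1, pr 0 ⊗ₖ pr 0, pr 0 ⊗ₖ pr 1, pr 1 ⊗ₖ pr 0], ?_, ?_, ?_⟩
      · intro k; fin_cases k <;> exact ⟨pr _, pr _, pr_psd _, pr_psd _, rfl⟩
      · rw [Fin.sum_univ_four]
        show pr 1 ⊗ₖ pr 1 + pr 0 ⊗ₖ pr 0 + pr 0 ⊗ₖ pr 1 + pr 1 ⊗ₖ pr 0 = 1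
        rw [← pr_sum_one]
        try abel
      · rw [Fin.sum_univ_four]
        simp only [Matrix.cons_val_zero, Matrix.cons_val_one, Matrix.head_cons,
          Matrix.cons_val_two, Matrix.tail_cons, Matrix.cons_val_three]
        rw [hV, max_eq_right hab, max_eq_left hcd]
        rw [show (star (twoQubitBasis α β γ δ 0) ⬝ᵥ
          ((pr 1 ⊗ₖ pr 1) *ᵥ twoQubitBasis α β γ δ 0)).re =
          (if (0:Fin 2) = 1 ∧ (0:Fin 2) = 1 then ‖α‖ ^ 2 else 0) +
          (if (1:Fin 2) = 1 ∧ (1:Fin 2) = 1 then ‖(starRingEnd ℂ) β‖ ^ 2 else 0) from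
          kron_pr_val α ((starRingEnd ℂ) β) 0 0 1 1 1 1 (by decide) (by decide)]
        rw [show (star (twoQubitBasis α β γ δ 1) ⬝ᵥ
          ((pr 0 ⊗ₖ pr 0) *ᵥ twoQubitBasis α β γ δ 1)).re =
          (if (0:Fin 2) = 0 ∧ (0:Fin 2) = 0 then ‖β‖ ^ 2 else 0) +
          (if (1:Fin 2) = 0 ∧ (1:Fin 2) = 0 then ‖-(starRingEnd ℂ) α‖ ^ 2 else 0) from
          kron_pr_val β (-(starRingEnd ℂ) α) 0 0 1 1 0 0 (by decide) (by decide)]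
        rw [show (star (twoQubitBasis α β γ δ 2) ⬝ᵥ
          ((pr 0 ⊗ₖ pr 1) *ᵥ twoQubitBasis α β γ δ 2)).re =
          (if (0:Fin 2) = 0 ∧ (1:Fin 2) = 1 then ‖γ‖ ^ 2 else 0) +
          (if (1:Fin 2) = 0 ∧ (0:Fin 2) = 1 then ‖(starRingEnd ℂ) δ‖ ^ 2 else 0) from
          kron_pr_val γ ((starRingEnd ℂ) δ) 0 1 1 0 0 1 (by decide) (by decide)]
        rw [show (star (twoQubitBasis α β γ δ 3) ⬝ᵥ
          ((pr 1 ⊗ₖ pr 0) *ᵥ twoQubitBasis α β γ δ 3)).re =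
          (if (0:Fin 2) = 1 ∧ (1:Fin 2) = 0 then ‖δ‖ ^ 2 else 0) +
          (if (1:Fin 2) = 1 ∧ (0:Fin 2) = 0 then ‖-(starRingEnd ℂ) γ‖ ^ 2 else 0) from
          kron_pr_val δ (-(starRingEnd ℂ) γ) 0 1 1 0 1 0 (by decide) (by decide)]
        simp only [ha, hb, hc, hd]
        norm_num [show ((1:Fin 2) = 0) = False from by simp, show ((0:Fin 2) = 1) = False from by simp,
          Complex.norm_conj, norm_neg]
        ring
    · refine ⟨![pr 1 ⊗ₖ pr 1, pr 0 ⊗ₖ pr 0, pr 1 ⊗ₖ pr 0, pr 0 ⊗ₖ pr 1], ?_, ?_, ?_⟩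
      · intro k; fin_cases k <;> exact ⟨pr _, pr _, pr_psd _, pr_psd _, rfl⟩
      · rw [Fin.sum_univ_four]
        show pr 1 ⊗ₖ pr 1 + pr 0 ⊗ₖ pr 0 + pr 1 ⊗ₖ pr 0 + pr 0 ⊗ₖ pr 1 = 1
        rw [← pr_sum_one]
        try abel
      · rw [Fin.sum_univ_four]
        simp only [Matrix.cons_val_zero, Matrix.cons_val_one, Matrix.head_cons,
          Matrix.cons_val_two, Matrix.tail_cons, Matrix.cons_val_three]
        rw [hV, max_eq_right hab, max_eq_right hcd]
        rw [show (star (twoQubitBasis α β γ δ 0) ⬝ᵥ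
          ((pr 1 ⊗ₖ pr 1) *ᵥ twoQubitBasis α β γ δ 0)).re =
          (if (0:Fin 2) = 1 ∧ (0:Fin 2) = 1 then ‖α‖ ^ 2 else 0) +
          (if (1:Fin 2) = 1 ∧ (1:Fin 2) = 1 then ‖(starRingEnd ℂ) β‖ ^ 2 else 0) from
          kron_pr_val α ((starRingEnd ℂ) β) 0 0 1 1 1 1 (by decide) (by decide)]
        rw [show (star (twoQubitBasis α β γ δ 1) ⬝ᵥ
          ((pr 0 ⊗ₖ pr 0) *ᵥ twoQubitBasis α β γ δ 1)).re =
          (if (0:Fin 2) = 0 ∧ (0:Fin 2) = 0 then ‖β‖ ^ 2 else 0) +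
          (if (1:Fin 2) = 0 ∧ (1:Fin 2) = 0 then ‖-(starRingEnd ℂ) α‖ ^ 2 else 0) from
          kron_pr_val β (-(starRingEnd ℂ) α) 0 0 1 1 0 0 (by decide) (by decide)]
        rw [show (star (twoQubitBasis α β γ δ 2) ⬝ᵥ
          ((pr 1 ⊗ₖ pr 0) *ᵥ twoQubitBasis α β γ δ 2)).re =
          (if (0:Fin 2) = 1 ∧ (1:Fin 2) = 0 then ‖γ‖ ^ 2 else 0) +
          (if (1:Fin 2) = 1 ∧ (0:Fin 2) = 0 then ‖(starRingEnd ℂ) δ‖ ^ 2 else 0) from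
          kron_pr_val γ ((starRingEnd ℂ) δ) 0 1 1 0 1 0 (by decide) (by decide)]
        rw [show (star (twoQubitBasis α β γ δ 3) ⬝ᵥ
          ((pr 0 ⊗ₖ pr 1) *ᵥ twoQubitBasis α β γ δ 3)).re =
          (if (0:Fin 2) = 0 ∧ (1:Fin 2) = 1 then ‖δ‖ ^ 2 else 0) +
          (if (1:Fin 2) = 0 ∧ (0:Fin 2) = 1 then ‖-(starRingEnd ℂ) γ‖ ^ 2 else 0) from
          kron_pr_val δ (-(starRingEnd ℂ) γ) 0 1 1 0 0 1 (by decide) (by decide)]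
        simp only [ha, hb, hc, hd]
        norm_num [show ((1:Fin 2) = 0) = False from by simp, show ((0:Fin 2) = 1) = False from by simp,
          Complex.norm_conj, norm_neg]
        ring
end

section
/- Let n = 2 and let α, β, γ, δ ∈ ℂ satisfy |α|² + |β|² = 1 and |γ|² + |δ|² = 1. Define φ₁ = α·e₁⊗e₁ + conj(β)·e₂⊗e₂, φ₂ = β·e₁⊗e₁ − conj(α)·e₂⊗e₂, φ₃ = γ·e₁⊗e₂ + conj(δ)·e₂⊗e₁, φ₄ = δ·e₁⊗e₂ − conj(γ)·e₂⊗e₁. Then there exists a POVM (P_1, P_2, P_3, P_4) whose elements are Kronecker products of positive semidefinite 2×2 matrices with (1/4) ∑_{k=1}^4 ⟨φ_k, P_k φ_k⟩ ≥ 1/2; moreover, if it is not the case that |α|² = |β|² = |γ|² = |δ|² = 1/2, then such a POVM exists with (1/4) ∑_{k=1}^4 ⟨φ_k, P_k φ_k⟩ > 1/2. In particular, among all two-qubit orthonormal LDOI bases, the Bell basis minimizes this optimal success probability. -/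
open Matrix Kronecker BigOperators
open scoped ComplexOrder

noncomputable def Ed (i : Fin 2) : Matrix (Fin 2) (Fin 2) ℂ :=
  Matrix.diagonal (fun j => if j = i then 1 else 0)

lemma Ed_psd (i : Fin 2) : (Ed i).PosSemidef := by
  refine Matrix.posSemidef_diagonal_iff.mpr fun j => ?_
  split <;> norm_num

lemma quad_s15 (v : Fin 2 × Fin 2 → ℂ) (i j : Fin 2) :
    (star v ⬝ᵥ ((Ed i ⊗ₖ Ed j) *ᵥ v)).re = ‖v (i, j)‖ ^ 2 := by
  have : star v ⬝ᵥ ((Ed i ⊗ₖ Ed j) *ᵥ v) = (starRingEnd ℂ) (v (i,j)) * v (i,j) := by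
    fin_cases i <;> fin_cases j <;>
      simp [Ed, dotProduct, Matrix.mulVec, Matrix.kroneckerMap_apply,
        Fintype.sum_prod_type, Fin.sum_univ_succ, Matrix.diagonal]
  rw [this, mul_comm, Complex.mul_conj, Complex.sq_norm]
  simp

lemma build (α β γ δ : ℂ) (x y : Fin 2) :
    ∃ P : Fin 4 → Matrix (Fin 2 × Fin 2) (Fin 2 × Fin 2) ℂ,
      (∀ k, ∃ Q R : Matrix (Fin 2) (Fin 2) ℂ,
        Q.PosSemidef ∧ R.PosSemidef ∧ P k = Q ⊗ₖ R) ∧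
      (∑ k, P k = 1) ∧
      (1 / 4 : ℝ) * ∑ k, (star (twoQubitBasis α β γ δ k) ⬝ᵥ (P k *ᵥ twoQubitBasis α β γ δ k)).re
        = ((if x = 0 then ‖α‖ ^ 2 else ‖β‖ ^ 2)
            + (if y = 0 then ‖γ‖ ^ 2 else ‖δ‖ ^ 2)) / 2 := by
  refine ⟨![Ed x ⊗ₖ Ed x, Ed (x+1) ⊗ₖ Ed (x+1), Ed y ⊗ₖ Ed (y+1), Ed (y+1) ⊗ₖ Ed y],
    ?_, ?_, ?_⟩
  · intro k
    fin_cases k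
    exacts [⟨_, _, Ed_psd x, Ed_psd x, rfl⟩, ⟨_, _, Ed_psd _, Ed_psd _, rfl⟩,
      ⟨_, _, Ed_psd y, Ed_psd _, rfl⟩, ⟨_, _, Ed_psd _, Ed_psd y, rfl⟩]
  · rw [Fin.sum_univ_four]
    ext ⟨a, b⟩ ⟨c, d⟩
    fin_cases x <;> fin_cases y <;> fin_cases a <;> fin_cases b <;> fin_cases c <;> fin_cases d <;>
      simp [Ed, Matrix.kroneckerMap_apply, Matrix.diagonal, Matrix.one_apply, Prod.ext_iff]
  · rw [Fin.sum_univ_four]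
    simp only [Matrix.cons_val_zero, Matrix.cons_val_one, Matrix.head_cons,
      Matrix.cons_val_two, Matrix.tail_cons, Matrix.cons_val_three, quad_s15]
    fin_cases x <;> fin_cases y <;>
      · simp [twoQubitBasis]
        ring

/-- For every two-qubit orthonormal LDOI basis there is a product POVM with success probability
at least `1/2`; when the basis is not the Bell basis (i.e. not all of
`|α|², |β|², |γ|², |δ|²` equal `1/2`) there is one with success probability strictly greater
than `1/2`. In particular, the Bell basis minimizes the optimal success probability among
two-qubit orthonormal LDOI bases. -/
theorem bell_minimizes (α β γ δ : ℂ)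
    (hαβ : ‖α‖ ^ 2 + ‖β‖ ^ 2 = 1)
    (hγδ : ‖γ‖ ^ 2 + ‖δ‖ ^ 2 = 1) :
    (∃ P : Fin 4 → Matrix (Fin 2 × Fin 2) (Fin 2 × Fin 2) ℂ,
      (∀ k, ∃ Q R : Matrix (Fin 2) (Fin 2) ℂ,
        Q.PosSemidef ∧ R.PosSemidef ∧ P k = Q ⊗ₖ R) ∧
      (∑ k, P k = 1) ∧
      (1 / 2 : ℝ) ≤ (1 / 4 : ℝ) *
          ∑ k, (star (twoQubitBasis α β γ δ k) ⬝ᵥ (P k *ᵥ twoQubitBasis α β γ δ k)).re) ∧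
    (¬(‖α‖ ^ 2 = 1 / 2 ∧ ‖β‖ ^ 2 = 1 / 2 ∧
        ‖γ‖ ^ 2 = 1 / 2 ∧ ‖δ‖ ^ 2 = 1 / 2) →
      ∃ P : Fin 4 → Matrix (Fin 2 × Fin 2) (Fin 2 × Fin 2) ℂ,
        (∀ k, ∃ Q R : Matrix (Fin 2) (Fin 2) ℂ,
          Q.PosSemidef ∧ R.PosSemidef ∧ P k = Q ⊗ₖ R) ∧
        (∑ k, P k = 1) ∧
        (1 / 2 : ℝ) < (1 / 4 : ℝ) *
            ∑ k, (star (twoQubitBasis α β γ δ k) ⬝ᵥ (P k *ᵥ twoQubitBasis α β γ δ k)).re) := by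
  constructor
  · rcases le_total (‖α‖ ^ 2) (‖β‖ ^ 2) with h1 | h1 <;>
      rcases le_total (‖γ‖ ^ 2) (‖δ‖ ^ 2) with h2 | h2
    · obtain ⟨P, hp, hs, hv⟩ := build α β γ δ 1 1
      exact ⟨P, hp, hs, by rw [hv]; norm_num; linarith⟩
    · obtain ⟨P, hp, hs, hv⟩ := build α β γ δ 1 0
      exact ⟨P, hp, hs, by rw [hv]; norm_num; linarith⟩
    · obtain ⟨P, hp, hs, hv⟩ := build α β γ δ 0 1
      exact ⟨P, hp, hs, by rw [hv]; norm_num; linarith⟩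
    · obtain ⟨P, hp, hs, hv⟩ := build α β γ δ 0 0
      exact ⟨P, hp, hs, by rw [hv]; norm_num; linarith⟩
  · intro h
    by_cases ha : ‖α‖ ^ 2 = 1 / 2
    · have hc : ¬ (‖γ‖ ^ 2 = 1 / 2) := fun hc =>
        h ⟨ha, by linarith, hc, by linarith⟩
      rcases lt_or_gt_of_ne hc with hlt | hgt
      · obtain ⟨P, hp, hs, hv⟩ := build α β γ δ 0 1
        exact ⟨P, hp, hs, by rw [hv]; norm_num; linarith⟩
      · obtain ⟨P, hp, hs, hv⟩ := build α β γ δ 0 0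
        exact ⟨P, hp, hs, by rw [hv]; norm_num; linarith⟩
    · rcases le_total (‖γ‖ ^ 2) (‖δ‖ ^ 2) with h2 | h2 <;>
        rcases lt_or_gt_of_ne ha with hlt | hgt
      · obtain ⟨P, hp, hs, hv⟩ := build α β γ δ 1 1
        exact ⟨P, hp, hs, by rw [hv]; norm_num; linarith⟩
      · obtain ⟨P, hp, hs, hv⟩ := build α β γ δ 0 1
        exact ⟨P, hp, hs, by rw [hv]; norm_num; linarith⟩
      · obtain ⟨P, hp, hs, hv⟩ := build α β γ δ 1 0
        exact ⟨P, hp, hs, by rw [hv]; norm_num; linarith⟩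
      · obtain ⟨P, hp, hs, hv⟩ := build α β γ δ 0 0
        exact ⟨P, hp, hs, by rw [hv]; norm_num; linarith⟩
end

section
/- For every orthonormal LDOI basis of ℂⁿ⊗ℂⁿ, there exists a POVM (P_{i,j})_{1≤i,j≤n} whose elements are Kronecker products of positive semidefinite matrices (hence separable) such that its success probability for the uniform ensemble satisfies (1/n²) ∑_{i,j=1}^n ⟨φ_{i,j}, P_{i,j} φ_{i,j}⟩ ≥ (n² − n + 2)/(2n²) = 1/2 − (n−2)/(2n²). In particular, since (n² − n + 2)/(2n²) ≥ 7/16 for all integers n ≥ 2, the success probability is at least 7/16 in every dimension. -/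
open Matrix Kronecker BigOperators
open scoped ComplexOrder

lemma stdE_psd {n : ℕ} (p : Fin n) : (Matrix.single p p (1:ℂ)).PosSemidef := by
  rw [Matrix.posSemidef_iff_dotProduct_mulVec]
  constructor
  · ext a b
    simp [Matrix.single, Matrix.conjTranspose_apply, and_comm]
  · intro x
    have : star x ⬝ᵥ (Matrix.single p p (1:ℂ)) *ᵥ x
        = (starRingEnd ℂ) (x p) * x p := by
      simp [dotProduct, Matrix.mulVec, Matrix.single, ite_and,
        Finset.sum_ite_eq, Finset.sum_ite_eq']
    rw [this, mul_comm, Complex.mul_conj]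
    exact Complex.zero_le_real.mpr (Complex.normSq_nonneg _)

lemma quad_eq {n : ℕ} (p q : Fin n) (v : Fin n × Fin n → ℂ) :
    star v ⬝ᵥ ((Matrix.single p p (1:ℂ) ⊗ₖ Matrix.single q q 1) *ᵥ v)
      = (starRingEnd ℂ) (v (p,q)) * v (p,q) := by
  simp [dotProduct, Matrix.mulVec, Matrix.kroneckerMap_apply,
    Matrix.single, Fintype.sum_prod_type, ite_and, mul_assoc,
    Finset.sum_ite_eq, Finset.sum_ite_eq', mul_comm, mul_left_comm]

lemma quad_re {n : ℕ} (p q : Fin n) (v : Fin n × Fin n → ℂ) :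
    (star v ⬝ᵥ ((Matrix.single p p (1:ℂ) ⊗ₖ Matrix.single q q 1) *ᵥ v)).re
      = ‖v (p,q)‖ ^ 2 := by
  rw [quad_eq, mul_comm, Complex.mul_conj]
  simp [Complex.sq_norm]

lemma sum_E_one {n : ℕ} :
    ∑ p : Fin n, ∑ q : Fin n, (Matrix.single p p (1:ℂ)) ⊗ₖ (Matrix.single q q 1) = 1 := by
  ext ⟨a,b⟩ ⟨c,d⟩
  simp [Matrix.sum_apply, Matrix.kroneckerMap_apply, Matrix.single,
    Matrix.one_apply, Prod.ext_iff, ite_and, Finset.sum_ite_eq, Finset.sum_ite_eq']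
  split_ifs <;> simp_all

/-- Universal LOCC lower bound: for every orthonormal LDOI basis there is a POVM whose elements
are Kronecker products of positive semidefinite matrices (hence separable) with success
probability at least `(n² − n + 2)/(2n²) = 1/2 − (n−2)/(2n²)` for the uniform ensemble; and
this quantity is at least `7/16` for every `n ≥ 2`. -/
theorem universal_locc_lower_bound (n : ℕ) (hn : 2 ≤ n) (U A : Matrix (Fin n) (Fin n) ℂ)
    (hU : Uᴴ * U = 1)
    (hA : ∀ i j : Fin n, i ≠ j → ‖A i j‖ ^ 2 + ‖A j i‖ ^ 2 = 1) :
    (∃ P : Fin n → Fin n → Matrix (Fin n × Fin n) (Fin n × Fin n) ℂ,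
      (∀ i j, ∃ Q R : Matrix (Fin n) (Fin n) ℂ,
        Q.PosSemidef ∧ R.PosSemidef ∧ P i j = Q ⊗ₖ R) ∧
      (∑ i, ∑ j, P i j = 1) ∧
      ((n : ℝ) ^ 2 - n + 2) / (2 * (n : ℝ) ^ 2) ≤
        (1 / (n : ℝ) ^ 2) *
          ∑ i, ∑ j, (star (ldoiBasis U A i j) ⬝ᵥ (P i j *ᵥ ldoiBasis U A i j)).re) ∧
    ((n : ℝ) ^ 2 - n + 2) / (2 * (n : ℝ) ^ 2) = 1 / 2 - ((n : ℝ) - 2) / (2 * (n : ℝ) ^ 2) ∧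
    (7 / 16 : ℝ) ≤ ((n : ℝ) ^ 2 - n + 2) / (2 * (n : ℝ) ^ 2) := by
  haveI : NeZero n := ⟨by omega⟩
  have hnR : (2:ℝ) ≤ (n:ℝ) := by exact_mod_cast hn
  have hn2 : (0:ℝ) < (n:ℝ)^2 := by positivity
  -- rows of U have norm 1
  have hUU : U * Uᴴ = 1 := mul_eq_one_comm.mp hU
  have hrow : ∀ i : Fin n, ∑ k, ‖U i k‖ ^ 2 = 1 := by
    intro i
    have h1 : (U * Uᴴ) i i = (1 : Matrix (Fin n) (Fin n) ℂ) i i := by rw [hUU]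
    simp only [Matrix.mul_apply, Matrix.conjTranspose_apply, Matrix.one_apply_eq] at h1
    have h3 : ∑ k, Complex.normSq (U i k) = 1 := by
      have h2 : ((∑ k, Complex.normSq (U i k) : ℝ) : ℂ) = 1 := by
        push_cast
        rw [← h1]
        exact Finset.sum_congr rfl fun k _ => (Complex.mul_conj _).symm
      exact_mod_cast h2
    simpa [Complex.sq_norm] using h3
  -- choose a cyclic shift t
  have key : ∑ t : Fin n, ∑ i : Fin n, ‖U i (i + t)‖ ^ 2 = n := by
    rw [Finset.sum_comm]
    have h : ∀ i : Fin n, ∑ t : Fin n, ‖U i (i + t)‖ ^ 2 = 1 := by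
      intro i
      rw [← hrow i]
      exact Fintype.sum_equiv (Equiv.addLeft i) _ _ (fun t => rfl)
    simp [h]
  obtain ⟨t, -, ht⟩ : ∃ t ∈ Finset.univ, (1:ℝ) ≤ ∑ i : Fin n, ‖U i (i + t)‖ ^ 2 := by
    apply Finset.exists_le_of_sum_le Finset.univ_nonempty
    rw [key]
    simp
  -- the orientation choice
  set C : Fin n → Fin n → Bool := fun i j =>
    decide ((1:ℝ) ≤ 2 * ‖A (min i j) (max i j)‖ ^ 2) with hCdef
  have hCsymm : ∀ i j, C i j = C j i := by
    intro i j; simp [hCdef, min_comm, max_comm]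
  -- the permutation of index pairs
  set π : Fin n × Fin n ≃ Fin n × Fin n :=
    { toFun := fun x => if x.1 = x.2 then (x.1 + t, x.1 + t)
        else if C x.1 x.2 then x else (x.2, x.1)
      invFun := fun x => if x.1 = x.2 then (x.1 - t, x.1 - t)
        else if C x.1 x.2 then x else (x.2, x.1)
      left_inv := by
        rintro ⟨i, j⟩
        by_cases hij : i = j
        · subst hij; simp
        · by_cases hC : C i j
          · simp [hij, hC]
          · have : C j i = false := by rw [← hCsymm]; simpa using hC
            simp [hij, hC, Ne.symm hij, this]
      right_inv := by
        rintro ⟨i, j⟩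
        by_cases hij : i = j
        · subst hij; simp
        · by_cases hC : C i j
          · simp [hij, hC]
          · have : C j i = false := by rw [← hCsymm]; simpa using hC
            simp [hij, hC, Ne.symm hij, this] } with hπdef
  refine ⟨⟨fun i j => Matrix.single (π (i,j)).1 (π (i,j)).1 (1:ℂ)
      ⊗ₖ Matrix.single (π (i,j)).2 (π (i,j)).2 1, ?_, ?_, ?_⟩, ?_, ?_⟩
  · intro i j
    exact ⟨_, _, stdE_psd _, stdE_psd _, rfl⟩
  · -- POVM sums to identity
    have e1 := Fintype.sum_prod_type (f := fun x : Fin n × Fin n =>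
      Matrix.single (π x).1 (π x).1 (1:ℂ) ⊗ₖ Matrix.single (π x).2 (π x).2 1)
    have e2 := Fintype.sum_prod_type (f := fun x : Fin n × Fin n =>
      Matrix.single x.1 x.1 (1:ℂ) ⊗ₖ Matrix.single x.2 x.2 1)
    have e3 := Equiv.sum_comp π (fun x : Fin n × Fin n =>
      Matrix.single x.1 x.1 (1:ℂ) ⊗ₖ Matrix.single x.2 x.2 1)
    calc (∑ i, ∑ j, Matrix.single (π (i,j)).1 (π (i,j)).1 (1:ℂ)
          ⊗ₖ Matrix.single (π (i,j)).2 (π (i,j)).2 1)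
        = ∑ x : Fin n × Fin n, Matrix.single (π x).1 (π x).1 (1:ℂ)
            ⊗ₖ Matrix.single (π x).2 (π x).2 1 := e1.symm
      _ = ∑ x : Fin n × Fin n, Matrix.single x.1 x.1 (1:ℂ)
            ⊗ₖ Matrix.single x.2 x.2 1 := e3
      _ = ∑ p, ∑ q, Matrix.single p p (1:ℂ) ⊗ₖ Matrix.single q q 1 := e2
      _ = 1 := sum_E_one
  · -- success probability bound
    have hterm : ∀ i j : Fin n,
        (star (ldoiBasis U A i j) ⬝ᵥ
          ((Matrix.single (π (i,j)).1 (π (i,j)).1 (1:ℂ)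
            ⊗ₖ Matrix.single (π (i,j)).2 (π (i,j)).2 1) *ᵥ ldoiBasis U A i j)).re
        = ‖ldoiBasis U A i j (π (i,j))‖ ^ 2 := by
      intro i j
      rw [quad_re]
    have hdiag : ∀ i : Fin n,
        ‖ldoiBasis U A i i (π (i,i))‖ ^ 2 = ‖U i (i + t)‖ ^ 2 := by
      intro i
      have h1 : π (i,i) = (i + t, i + t) := by simp [hπdef]
      rw [h1]
      simp [ldoiBasis]
    have hoff : ∀ i j : Fin n, i ≠ j →
        (1:ℝ)/2 ≤ ‖ldoiBasis U A i j (π (i,j))‖ ^ 2 := by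
      intro i j hij
      have habs2 : ∀ i j : Fin n, i ≠ j → 0 ≤ ‖A i j‖ ^ 2 := fun _ _ _ => by positivity
      rcases lt_or_gt_of_ne hij with h | h
      · -- i < j
        have hmin : min i j = i := min_eq_left h.le
        have hmax : max i j = j := max_eq_right h.le
        have hAij := hA i j hij
        by_cases hC : (1:ℝ) ≤ 2 * ‖A i j‖ ^ 2
        · have hπ : π (i,j) = (i,j) := by simp [hπdef, hij, hCdef, hmin, hmax, hC]
          rw [hπ]
          have : ldoiBasis U A i j (i,j) = A i j := by simp [ldoiBasis, hij, h]
          rw [this]; linarith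
        · have hπ : π (i,j) = (j,i) := by simp [hπdef, hij, hCdef, hmin, hmax, hC]
          rw [hπ]
          have : ldoiBasis U A i j (j,i) = (starRingEnd ℂ) (A j i) := by
            simp [ldoiBasis, hij, h, Prod.ext_iff, Ne.symm hij]
          rw [this]
          rw [Complex.norm_conj]
          push_neg at hC
          linarith
      · -- j < i
        have hmin : min i j = j := min_eq_right h.le
        have hmax : max i j = i := max_eq_left h.le
        have hAij := hA i j hij
        by_cases hC : (1:ℝ) ≤ 2 * ‖A j i‖ ^ 2
        · have hπ : π (i,j) = (i,j) := by simp [hπdef, hij, hCdef, hmin, hmax, hC]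
          rw [hπ]
          have : ldoiBasis U A i j (i,j) = -(starRingEnd ℂ) (A j i) := by
            simp [ldoiBasis, hij, not_lt.mpr h.le, Prod.ext_iff, Ne.symm hij, hij]
          rw [this]
          rw [norm_neg, Complex.norm_conj]
          linarith
        · have hπ : π (i,j) = (j,i) := by simp [hπdef, hij, hCdef, hmin, hmax, hC]
          rw [hπ]
          have : ldoiBasis U A i j (j,i) = A i j := by
            simp [ldoiBasis, hij, not_lt.mpr h.le]
          rw [this]
          push_neg at hC
          linarith
    -- assemble
    have hS : ((n:ℝ)^2 - n + 2)/2 ≤ ∑ i, ∑ j,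
        (star (ldoiBasis U A i j) ⬝ᵥ
          ((Matrix.single (π (i,j)).1 (π (i,j)).1 (1:ℂ)
            ⊗ₖ Matrix.single (π (i,j)).2 (π (i,j)).2 1) *ᵥ ldoiBasis U A i j)).re := by
      have hsplit : ∀ i : Fin n, (∑ j, ‖ldoiBasis U A i j (π (i,j))‖ ^ 2)
          = ‖ldoiBasis U A i i (π (i,i))‖ ^ 2
            + ∑ j ∈ Finset.univ.erase i, ‖ldoiBasis U A i j (π (i,j))‖ ^ 2 := by
        intro i
        exact (Finset.add_sum_erase _ _ (Finset.mem_univ i)).symm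
      have hbound2 : ∀ i : Fin n, ((n:ℝ) - 1)/2
          ≤ ∑ j ∈ Finset.univ.erase i, ‖ldoiBasis U A i j (π (i,j))‖ ^ 2 := by
        intro i
        have hcard : (Finset.univ.erase i).card = n - 1 := by
          rw [Finset.card_erase_of_mem (Finset.mem_univ i), Finset.card_univ, Fintype.card_fin]
        have := Finset.card_nsmul_le_sum (Finset.univ.erase i)
          (fun j => ‖ldoiBasis U A i j (π (i,j))‖ ^ 2) ((1:ℝ)/2)
          (fun j hj => hoff i j (Ne.symm (Finset.ne_of_mem_erase hj)))
        rw [hcard] at this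
        have hcast : ((n - 1 : ℕ) : ℝ) = (n:ℝ) - 1 := by
          have : (1:ℕ) ≤ n := by omega
          push_cast [this]; ring
        calc ((n:ℝ) - 1)/2 = ((n - 1 : ℕ) : ℝ) * ((1:ℝ)/2) := by rw [hcast]; ring
          _ ≤ _ := by simpa [nsmul_eq_mul] using this
      calc ((n:ℝ)^2 - n + 2)/2 = 1 + (n:ℝ) * (((n:ℝ) - 1)/2) := by ring
        _ ≤ (∑ i, ‖U i (i + t)‖ ^ 2) + ∑ i : Fin n, ((n:ℝ) - 1)/2 := by
            have hconst : ∑ _i : Fin n, ((n:ℝ) - 1)/2 = (n:ℝ) * (((n:ℝ) - 1)/2) := by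
              rw [Finset.sum_const, Finset.card_univ, Fintype.card_fin, nsmul_eq_mul]
            rw [hconst]
            exact add_le_add_left ht _
        _ ≤ (∑ i, ‖ldoiBasis U A i i (π (i,i))‖ ^ 2)
              + ∑ i, ∑ j ∈ Finset.univ.erase i, ‖ldoiBasis U A i j (π (i,j))‖ ^ 2 := by
            refine add_le_add (le_of_eq ?_) (Finset.sum_le_sum fun i _ => hbound2 i)
            exact Finset.sum_congr rfl fun i _ => (hdiag i).symm
        _ = ∑ i, ∑ j, ‖ldoiBasis U A i j (π (i,j))‖ ^ 2 := by
            rw [← Finset.sum_add_distrib]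
            exact Finset.sum_congr rfl (fun i _ => (hsplit i).symm)
        _ = _ := by
            refine Finset.sum_congr rfl (fun i _ => Finset.sum_congr rfl (fun j _ => ?_))
            rw [hterm]
    calc ((n:ℝ)^2 - n + 2) / (2 * (n:ℝ)^2)
        = (1/(n:ℝ)^2) * (((n:ℝ)^2 - n + 2)/2) := by ring
      _ ≤ _ := by
          apply mul_le_mul_of_nonneg_left hS
          positivity
  · have hne : (n:ℝ) ≠ 0 := by positivity
    field_simp
    ring
  · rw [div_le_div_iff₀ (by norm_num) (by positivity)]
    nlinarith [sq_nonneg ((n:ℝ) - 4)]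
end

section
/- For every integer n ≥ 2 and every n×n unitary matrix U = (u_{i,j}), we have ∑_{i=1}^n max{1/2, max_{1≤k≤n} |u_{k,i}|²} − max_{σ ∈ S_n} ∑_{i=1}^n |u_{i,σ(i)}|² ≤ (n−2)/2, where the maximum is over all permutations σ of {1,…,n}. Consequently, for any orthonormal LDOI basis, the PPT upper bound (1/n²)·(∑_{i≠j} max{|a_{i,j}|²,|a_{j,i}|²} + ∑_i max{1/2, max_k |u_{k,i}|²}) exceeds the product-measurement lower bound (1/n²)·(∑_{i≠j} max{|a_{i,j}|²,|a_{j,i}|²} + max_σ ∑_i |u_{i,σ(i)}|²) by at most (n−2)/(2n²). -/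
open Matrix BigOperators Finset

lemma avg_equiv {α β : Type*} [Fintype α] [Fintype β] [Nonempty α]
    (h : Fintype.card β = Fintype.card α) (g : α → β → ℝ) :
    ∃ e : α ≃ β, ∑ a, ∑ b, g a b ≤ (Fintype.card α : ℝ) * ∑ a, g a (e a) := by
  set N := Fintype.card α with hNdef
  have hN : 0 < N := Fintype.card_pos
  haveI : NeZero N := ⟨hN.ne'⟩
  let ea : α ≃ Fin N := Fintype.equivFin α
  let eb : β ≃ Fin N := (Fintype.equivFin β).trans (finCongr h)
  have htot : ∑ c : Fin N, ∑ i : Fin N, g (ea.symm i) (eb.symm (i + c))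
      = ∑ a, ∑ b, g a b := by
    rw [Finset.sum_comm]
    calc ∑ i : Fin N, ∑ c : Fin N, g (ea.symm i) (eb.symm (i + c))
        = ∑ i : Fin N, ∑ j : Fin N, g (ea.symm i) (eb.symm j) := by
          refine Finset.sum_congr rfl fun i _ => ?_
          exact Equiv.sum_comp (Equiv.addLeft i) (fun j => g (ea.symm i) (eb.symm j))
      _ = ∑ i : Fin N, ∑ b, g (ea.symm i) b := by
          refine Finset.sum_congr rfl fun i _ => ?_
          exact Equiv.sum_comp eb.symm (fun b => g (ea.symm i) b)
      _ = ∑ a, ∑ b, g a b := Equiv.sum_comp ea.symm (fun a => ∑ b, g a b)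
  have key : ∃ c : Fin N,
      (∑ a, ∑ b, g a b) / N ≤ ∑ i : Fin N, g (ea.symm i) (eb.symm (i + c)) := by
    have := Finset.exists_le_of_sum_le (s := (Finset.univ : Finset (Fin N)))
      (f := fun _ => (∑ a, ∑ b, g a b) / N)
      (g := fun c => ∑ i : Fin N, g (ea.symm i) (eb.symm (i + c)))
      Finset.univ_nonempty ?_
    · obtain ⟨c, _, hc⟩ := this; exact ⟨c, hc⟩
    · rw [htot, Finset.sum_const, Finset.card_univ, Fintype.card_fin, nsmul_eq_mul]
      rw [mul_div_cancel₀]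
      exact_mod_cast hN.ne'
  obtain ⟨c, hc⟩ := key
  refine ⟨ea.trans ((Equiv.addRight c).trans eb.symm), ?_⟩
  have hs : ∑ a, g a ((ea.trans ((Equiv.addRight c).trans eb.symm)) a)
      = ∑ i : Fin N, g (ea.symm i) (eb.symm (i + c)) := by
    rw [← Equiv.sum_comp ea (fun i => g (ea.symm i) (eb.symm (i + c)))]
    simp
  rw [hs]
  rw [← div_le_iff₀' (by exact_mod_cast hN : (0:ℝ) < N)]
  exact hc

lemma key_gap (n : ℕ) (hn : 2 ≤ n) (U : Matrix (Fin n) (Fin n) ℂ)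
    (hU : Uᴴ * U = 1) :
    (∑ i, max (1 / 2 : ℝ) (⨆ k, ‖U k i‖ ^ 2)) ≤
      (⨆ σ : Equiv.Perm (Fin n), ∑ i, ‖U i (σ i)‖ ^ 2) + ((n : ℝ) - 2) / 2 := by
  classical
  haveI : Nonempty (Fin n) := ⟨⟨0, by omega⟩⟩
  set f : Fin n → Fin n → ℝ := fun i j => ‖U i j‖ ^ 2 with hf
  have hfnn : ∀ i j, 0 ≤ f i j := fun i j => by positivity
  have hentry : ∀ (V : Matrix (Fin n) (Fin n) ℂ) i j,
      star (V i j) * V i j = ((‖V i j‖ ^ 2 : ℝ) : ℂ) := by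
    intro V i j
    rw [Complex.sq_norm, Complex.star_def, Complex.normSq_eq_conj_mul_self]
  have hcol : ∀ i, ∑ k, f k i = 1 := by
    intro i
    have h := congrFun (congrFun hU i) i
    rw [Matrix.mul_apply, Matrix.one_apply_eq] at h
    have h2 : ∑ k, ((f k i : ℝ) : ℂ) = 1 := by
      rw [← h]
      refine Finset.sum_congr rfl fun k _ => ?_
      rw [Matrix.conjTranspose_apply, hentry]
    exact_mod_cast h2
  have hU' : U * Uᴴ = 1 := mul_eq_one_comm.mp hU
  have hrow : ∀ i, ∑ j, f i j = 1 := by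
    intro i
    have h := congrFun (congrFun hU' i) i
    rw [Matrix.mul_apply, Matrix.one_apply_eq] at h
    have h2 : ∑ j, ((f i j : ℝ) : ℂ) = 1 := by
      rw [← h]
      refine Finset.sum_congr rfl fun j _ => ?_
      rw [Matrix.conjTranspose_apply, mul_comm, hentry]
    exact_mod_cast h2
  set m : Fin n → ℝ := fun i => ⨆ k, f k i with hm
  set F : Equiv.Perm (Fin n) → ℝ := fun σ => ∑ i, f i (σ i) with hF
  set Sup : ℝ := ⨆ σ : Equiv.Perm (Fin n), F σ with hSup
  have hsupge : ∀ σ, F σ ≤ Sup :=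
    fun σ => le_ciSup (Set.Finite.bddAbove (Set.finite_range F)) σ
  have hm_ge : ∀ i k, f k i ≤ m i :=
    fun i k => le_ciSup (f := fun k => f k i) (Set.Finite.bddAbove (Set.finite_range _)) k
  have hm_ex : ∀ i, ∃ k, m i = f k i := by
    intro i
    obtain ⟨k, hk⟩ := exists_eq_ciSup_of_finite (f := fun k => f k i)
    exact ⟨k, hk.symm⟩
  choose K hK using hm_ex
  set I : Finset (Fin n) := univ.filter (fun i => 1/2 < m i) with hI
  have hinj : ∀ i ∈ I, ∀ j ∈ I, K i = K j → i = j := by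
    intro i hi j hj hKij
    by_contra hne
    have h1 : 1/2 < f (K i) i := by rw [← hK i]; exact (mem_filter.mp hi).2
    have h2 : 1/2 < f (K i) j := by rw [hKij, ← hK j]; exact (mem_filter.mp hj).2
    have hle : f (K i) i + f (K i) j ≤ 1 := by
      rw [← hrow (K i)]
      have := Finset.sum_le_sum_of_subset_of_nonneg (Finset.subset_univ {i, j})
        (fun x _ _ => hfnn (K i) x)
      rwa [Finset.sum_pair hne] at this
    linarith
  set Ic : Finset (Fin n) := univ.filter (fun i => ¬ 1/2 < m i) with hIc
  have hcards : I.card + Ic.card = n := by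
    rw [hI, hIc, Finset.card_filter_add_card_filter_not, card_univ, Fintype.card_fin]
  have hsplit : ∑ i, max (1/2 : ℝ) (m i) = (∑ i ∈ I, m i) + (Ic.card : ℝ)/2 := by
    rw [← Finset.sum_filter_add_sum_filter_not univ (fun i => 1/2 < m i)]
    congr 1
    · exact Finset.sum_congr rfl fun i hi => max_eq_right (le_of_lt (mem_filter.mp hi).2)
    · rw [Finset.sum_congr rfl
        (fun i hi => max_eq_left (not_lt.mp (mem_filter.mp hi).2)),
        Finset.sum_const, nsmul_eq_mul]
      ring
  have goal2 : (∑ i ∈ I, m i) + (Ic.card : ℝ)/2 ≤ Sup + ((n : ℝ) - 2) / 2 := by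
    obtain h2le | hlt := le_or_gt 2 I.card
    · -- t ≥ 2
      set J : Finset (Fin n) := I.image K with hJ
      have hφbij : Function.Bijective
          (fun i : {i // i ∈ I} => (⟨K i, Finset.mem_image_of_mem K i.2⟩ : {x // x ∈ J})) := by
        constructor
        · intro i j hij
          exact Subtype.ext (hinj _ i.2 _ j.2 (congrArg Subtype.val hij))
        · rintro ⟨x, hx⟩
          obtain ⟨i, hi, hKi⟩ := Finset.mem_image.mp hx
          exact ⟨⟨i, hi⟩, Subtype.ext hKi⟩
      set e : {x // x ∈ J} ≃ {i // i ∈ I} := (Equiv.ofBijective _ hφbij).symm with he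
      set σ : Equiv.Perm (Fin n) := e.extendSubtype with hσdef
      have hσ : ∀ i ∈ I, σ (K i) = i := by
        intro i hi
        have hmem : K i ∈ J := Finset.mem_image_of_mem _ hi
        rw [hσdef, Equiv.extendSubtype_apply_of_mem e (K i) hmem]
        have : e ⟨K i, hmem⟩ = ⟨i, hi⟩ := by
          rw [he, Equiv.symm_apply_eq]
          rfl
        rw [this]
      have hFσ : ∑ i ∈ I, m i ≤ F σ := by
        have h1 : ∑ x ∈ J, f x (σ x) ≤ F σ := by
          exact Finset.sum_le_sum_of_subset_of_nonneg (Finset.subset_univ J)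
            (fun x _ _ => hfnn _ _)
        have h2 : ∑ x ∈ J, f x (σ x) = ∑ i ∈ I, f (K i) (σ (K i)) :=
          Finset.sum_image hinj
        have h3 : ∑ i ∈ I, f (K i) (σ (K i)) = ∑ i ∈ I, m i := by
          refine Finset.sum_congr rfl fun i hi => ?_
          rw [hσ i hi, ← hK i]
        rw [h2, h3] at h1
        exact h1
      have hc2 : (Ic.card : ℝ) ≤ (n : ℝ) - 2 := by
        have : Ic.card + 2 ≤ n := by omega
        have := (Nat.cast_le (α := ℝ)).mpr this
        push_cast at this
        linarith
      have := hsupge σ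
      linarith
    · obtain h0 | h1 : I.card = 0 ∨ I.card = 1 := by omega
      · -- t = 0
        have hIe : I = ∅ := Finset.card_eq_zero.mp h0
        obtain ⟨e, he⟩ := avg_equiv (α := Fin n) (β := Fin n) rfl f
        have htot : ∑ a, ∑ b, f a b = (n : ℝ) := by
          rw [Finset.sum_congr rfl (fun a _ => hrow a)]
          simp
        have hn0 : (0:ℝ) < n := by positivity
        have h1F : (1:ℝ) ≤ F e := by
          rw [htot, Fintype.card_fin] at he
          nlinarith [he]
        have hcn : (Ic.card : ℝ) = (n : ℝ) := by
          have : Ic.card = n := by omega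
          exact_mod_cast this
        have := hsupge e
        rw [hIe, Finset.sum_empty, hcn]
        linarith
      · -- t = 1
        obtain ⟨i₀, hIs⟩ := Finset.card_eq_one.mp h1
        have hi₀ : i₀ ∈ I := by rw [hIs]; exact Finset.mem_singleton_self i₀
        have hm₀ : 1/2 < m i₀ := (mem_filter.mp hi₀).2
        set k₀ : Fin n := K i₀ with hk₀def
        have hk₀ : m i₀ = f k₀ i₀ := hK i₀
        haveI : Nonempty {x : Fin n // x ≠ k₀} := by
          obtain ⟨b, hb⟩ := Fintype.exists_ne_of_one_lt_card
            (by rw [Fintype.card_fin]; omega) k₀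
          exact ⟨⟨b, hb⟩⟩
        have hcardeq : Fintype.card {x : Fin n // x ≠ i₀} = Fintype.card {x : Fin n // x ≠ k₀} :=
          Fintype.card_congr (Equiv.subtypeEquiv (Equiv.swap i₀ k₀) (by
            intro a
            constructor
            · intro ha hc
              apply ha
              have := congrArg (Equiv.swap i₀ k₀).symm hc
              simpa using this
            · intro ha hc
              exact ha (by rw [hc]; simp))).symm
        obtain ⟨e, he⟩ := avg_equiv hcardeq (fun (a : {x : Fin n // x ≠ k₀})
          (b : {x : Fin n // x ≠ i₀}) => f a b)
        have hcard' : Fintype.card {x : Fin n // x ≠ k₀} = n - 1 := by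
          simp [Fintype.card_subtype_compl]
        have hsub1 : ∀ a : Fin n, ∑ b : {x : Fin n // x ≠ i₀}, f a b = 1 - f a i₀ := by
          intro a
          have h1 : ∑ b ∈ univ.erase i₀, f a b = ∑ b : {x : Fin n // x ≠ i₀}, f a b :=
            Finset.sum_subtype _ (by simp) _
          have h2 : f a i₀ + ∑ b ∈ univ.erase i₀, f a b = 1 := by
            rw [Finset.add_sum_erase univ (fun b => f a b) (mem_univ i₀)]; exact hrow a
          linarith [h1, h2]
        have htot : ∑ a : {x : Fin n // x ≠ k₀}, ∑ b : {x : Fin n // x ≠ i₀}, f a b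
            = (n : ℝ) - 2 + m i₀ := by
          rw [show (∑ a : {x : Fin n // x ≠ k₀}, ∑ b : {x : Fin n // x ≠ i₀}, f a b)
              = ∑ a : {x : Fin n // x ≠ k₀}, (1 - f (a : Fin n) i₀) from
            Finset.sum_congr rfl (fun a _ => hsub1 a)]
          have h1 : ∑ a ∈ univ.erase k₀, (1 - f a i₀)
              = ∑ a : {x : Fin n // x ≠ k₀}, (1 - f a i₀) :=
            Finset.sum_subtype _ (by simp) _
          rw [← h1, Finset.sum_sub_distrib, Finset.sum_const, Finset.card_erase_of_mem
            (mem_univ k₀), card_univ, Fintype.card_fin, nsmul_eq_mul, mul_one]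
          have h2 : f k₀ i₀ + ∑ a ∈ univ.erase k₀, f a i₀ = 1 := by
            rw [Finset.add_sum_erase univ (fun a => f a i₀) (mem_univ k₀)]; exact hcol i₀
          have h3 : ((n - 1 : ℕ) : ℝ) = (n : ℝ) - 1 := by
            have : (1:ℕ) ≤ n := by omega
            push_cast [this]
            ring
          rw [h3, hk₀]
          linarith [h2]
        rw [htot, hcard'] at he
        have h3 : ((n - 1 : ℕ) : ℝ) = (n : ℝ) - 1 := by
          have : (1:ℕ) ≤ n := by omega
          push_cast [this]
          ring
        rw [h3] at he
        set σ : Equiv.Perm (Fin n) := e.extendSubtype with hσdef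
        have hσk₀ : σ k₀ = i₀ := by
          have := Equiv.extendSubtype_not_mem e k₀ (by simp)
          rw [← hσdef] at this
          exact not_ne_iff.mp this
        have hFσ : F σ = f k₀ i₀ + ∑ a : {x : Fin n // x ≠ k₀}, f a (e a) := by
          have h1 : F σ = f k₀ (σ k₀) + ∑ x ∈ univ.erase k₀, f x (σ x) := by
            rw [hF]
            exact (Finset.add_sum_erase univ (fun x => f x (σ x)) (mem_univ k₀)).symm
          have h2 : ∑ x ∈ univ.erase k₀, f x (σ x)
              = ∑ a : {x : Fin n // x ≠ k₀}, f a (σ a) :=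
            Finset.sum_subtype _ (by simp) _
          have h4 : ∀ a : {x : Fin n // x ≠ k₀}, f a (σ a) = f a (e a) := by
            intro a
            rw [hσdef, Equiv.extendSubtype_apply_of_mem e a a.2]
          rw [h1, h2, hσk₀, Finset.sum_congr rfl (fun a _ => h4 a)]
        -- extension sum ≥ 1/2
        have hn2 : (2:ℝ) ≤ (n:ℝ) := by exact_mod_cast hn
        have hhalf : (1:ℝ)/2 ≤ ∑ a : {x : Fin n // x ≠ k₀}, f a (e a) := by
          nlinarith [he, hm₀]
        have hsum : ∑ i ∈ I, m i = m i₀ := by rw [hIs, Finset.sum_singleton]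
        have hcn : (Ic.card : ℝ) = (n : ℝ) - 1 := by
          have : Ic.card = n - 1 := by omega
          rw [this]
          have : (1:ℕ) ≤ n := by omega
          push_cast [this]
          ring
        have := hsupge σ
        rw [hsum, hcn]
        rw [hFσ, ← hk₀] at this
        linarith
  calc ∑ i, max (1/2 : ℝ) (m i) = (∑ i ∈ I, m i) + (Ic.card : ℝ)/2 := hsplit
    _ ≤ Sup + ((n : ℝ) - 2) / 2 := goal2

/-- For every `n × n` unitary matrix `U`,
`∑_i max{1/2, max_k |u_{k,i}|²} − max_σ ∑_i |u_{i,σ(i)}|² ≤ (n−2)/2`; consequently, for any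
orthonormal LDOI basis the PPT upper bound exceeds the product-measurement lower bound by at
most `(n−2)/(2n²)`. -/
theorem ppt_locc_gap (n : ℕ) (hn : 2 ≤ n) (U : Matrix (Fin n) (Fin n) ℂ)
    (hU : Uᴴ * U = 1) :
    (∑ i, max (1 / 2 : ℝ) (⨆ k, ‖U k i‖ ^ 2)) -
        (⨆ σ : Equiv.Perm (Fin n), ∑ i, ‖U i (σ i)‖ ^ 2) ≤
      ((n : ℝ) - 2) / 2 ∧
    (∀ A : Matrix (Fin n) (Fin n) ℂ,
      (∀ i j : Fin n, i ≠ j → ‖A i j‖ ^ 2 + ‖A j i‖ ^ 2 = 1) →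
      (1 / (n : ℝ) ^ 2) *
          ((∑ i, ∑ j, if i = j then 0 else
              max (‖A i j‖ ^ 2) (‖A j i‖ ^ 2)) +
            ∑ i, max (1 / 2 : ℝ) (⨆ k, ‖U k i‖ ^ 2)) -
        (1 / (n : ℝ) ^ 2) *
          ((∑ i, ∑ j, if i = j then 0 else
              max (‖A i j‖ ^ 2) (‖A j i‖ ^ 2)) +
            ⨆ σ : Equiv.Perm (Fin n), ∑ i, ‖U i (σ i)‖ ^ 2) ≤
        ((n : ℝ) - 2) / (2 * (n : ℝ) ^ 2)) := by
  have key := key_gap n hn U hU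
  set S := ∑ i, max (1/2 : ℝ) (⨆ k, ‖U k i‖ ^ 2) with hS
  set Sp := ⨆ σ : Equiv.Perm (Fin n), ∑ i, ‖U i (σ i)‖ ^ 2 with hSp
  have hdiff : S - Sp ≤ ((n:ℝ) - 2)/2 := by linarith [key]
  refine ⟨hdiff, ?_⟩
  intro A _
  set X := (∑ i, ∑ j, if i = j then 0 else
      max (‖A i j‖ ^ 2) (‖A j i‖ ^ 2)) with hX
  have hrw : (1 / (n : ℝ) ^ 2) * (X + S) - (1 / (n : ℝ) ^ 2) * (X + Sp)
      = (1 / (n : ℝ) ^ 2) * (S - Sp) := by ring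
  rw [hrw]
  calc (1 / (n : ℝ) ^ 2) * (S - Sp)
      ≤ (1 / (n : ℝ) ^ 2) * (((n:ℝ) - 2)/2) :=
        mul_le_mul_of_nonneg_left hdiff (by positivity)
    _ = ((n : ℝ) - 2) / (2 * (n : ℝ) ^ 2) := by ring
end
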